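/- arXiv:2212.10871 — 6 statements merged into one kernel-verified Lean document; each statement's English description precedes it below -/
import Mathlib

section
/- Let (p_k)_{k≥0} be a critical offspring distribution with p_1 < 1 and probability generating function Φ. Then the function g(t) := t/Φ(t) is a continuous, strictly increasing bijection from [0,1] onto [0,1], and it is the inverse of the restriction to [0,1] of the tree-size generating function y; in particular y(t/Φ(t)) = t for all t ∈ [0,1] and y(z)/Φ(y(z)) = z for all z ∈ [0,1]. -/
open Set

private lemma one_sub_pow_le_aux {s : ℝ} (hs0 : 0 ≤ s) (hs1 : s ≤ 1) (n : ℕ) :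
    1 - s ^ n ≤ n * (1 - s) := by
  induction n with
  | zero => simp
  | succ n ih =>
    have h1 : s ^ n ≤ 1 := pow_le_one₀ hs0 hs1
    have h2 : 0 ≤ s ^ n := pow_nonneg hs0 n
    have h3 : s * (1 - s ^ n) ≤ (n : ℝ) * (1 - s) := by
      calc s * (1 - s ^ n) ≤ 1 * (1 - s ^ n) := by nlinarith
        _ = 1 - s ^ n := one_mul _
        _ ≤ n * (1 - s) := ih
    push_cast
    calc 1 - s ^ (n + 1) = (1 - s) + s * (1 - s ^ n) := by ring
      _ ≤ (1 - s) + n * (1 - s) := by linarith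
      _ = ((n : ℝ) + 1) * (1 - s) := by ring

private lemma pow_sub_pow_le_aux {s t : ℝ} (hs0 : 0 ≤ s) (hst : s ≤ t) (ht1 : t ≤ 1) (n : ℕ) :
    t ^ n - s ^ n ≤ n * (t - s) := by
  induction n with
  | zero => simp
  | succ n ih =>
    have h1 : s ^ n ≤ t ^ n := pow_le_pow_left₀ hs0 hst n
    have h2 : t ^ n ≤ 1 := pow_le_one₀ (hs0.trans hst) ht1
    have h3 : 0 ≤ s ^ n := pow_nonneg hs0 n
    have ht0 : 0 ≤ t := hs0.trans hst
    push_cast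
    calc t ^ (n + 1) - s ^ (n + 1) = t * (t ^ n - s ^ n) + (t - s) * s ^ n := by ring
      _ ≤ (n : ℝ) * (t - s) + (t - s) := by nlinarith
      _ = ((n : ℝ) + 1) * (t - s) := by ring

/-- For a critical offspring distribution `p` with `p 1 < 1` and pgf
`Φ(t) = ∑' k, p k * t^k`, and tree-size generating function `y(z) = ∑' n, q n * z^n`
(characterized by `y(z) = z·Φ(y(z))` on `[0,1]`), the map `g(t) = t / Φ(t)` is a continuous,
strictly increasing bijection of `[0,1]` onto itself, and it is the inverse of the restriction
of `y` to `[0,1]`. -/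
theorem stmt0
    (p : ℕ → ℝ) (hp : ∀ k, 0 ≤ p k)
    (hpsum : ∑' k, p k = 1)
    (hcrit : ∑' k : ℕ, (k : ℝ) * p k = 1)
    (hp1 : p 1 < 1)
    (q : ℕ → ℝ) (hq0 : q 0 = 0) (hqnn : ∀ n, 0 ≤ q n)
    (hqsum : ∑' n, q n = 1)
    (hfix : ∀ z ∈ Set.Icc (0:ℝ) 1,
      (∑' n, q n * z ^ n) = z * ∑' k, p k * (∑' n, q n * z ^ n) ^ k) :
    ContinuousOn (fun t : ℝ => t / ∑' k, p k * t ^ k) (Set.Icc 0 1) ∧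
    StrictMonoOn (fun t : ℝ => t / ∑' k, p k * t ^ k) (Set.Icc 0 1) ∧
    Set.BijOn (fun t : ℝ => t / ∑' k, p k * t ^ k) (Set.Icc 0 1) (Set.Icc 0 1) ∧
    (∀ t ∈ Set.Icc (0:ℝ) 1,
      (∑' n, q n * (t / ∑' k, p k * t ^ k) ^ n) = t) ∧
    (∀ z ∈ Set.Icc (0:ℝ) 1,
      (∑' n, q n * z ^ n) / (∑' k, p k * (∑' n, q n * z ^ n) ^ k) = z) := by
  -- summability facts
  have hpS : Summable p := by
    by_contra h
    rw [tsum_eq_zero_of_not_summable h] at hpsum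
    norm_num at hpsum
  have hkS : Summable (fun k : ℕ => (k : ℝ) * p k) := by
    by_contra h
    rw [tsum_eq_zero_of_not_summable h] at hcrit
    norm_num at hcrit
  have hqS : Summable q := by
    by_contra h
    rw [tsum_eq_zero_of_not_summable h] at hqsum
    norm_num at hqsum
  -- p 0 > 0
  have hp0 : 0 < p 0 := by
    rcases (hp 0).lt_or_eq with h | h
    · exact h
    exfalso
    have h0 : p 0 = 0 := h.symm
    have hfS : Summable (fun k : ℕ => ((k : ℝ) - 1) * p k) := by
      refine (hkS.sub hpS).congr fun k => ?_
      ring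
    have hftsum : ∑' k : ℕ, ((k : ℝ) - 1) * p k = 0 := by
      have h1 : ∑' k : ℕ, ((k : ℝ) - 1) * p k
          = (∑' k : ℕ, (k : ℝ) * p k) - ∑' k, p k := by
        rw [← Summable.tsum_sub hkS hpS]
        exact tsum_congr fun k => by ring
      rw [h1, hcrit, hpsum]; ring
    have hfnn : ∀ k : ℕ, 0 ≤ ((k : ℝ) - 1) * p k := by
      intro k
      match k with
      | 0 => simp [h0]
      | (n + 1) =>
        apply mul_nonneg _ (hp _)
        have : (0 : ℝ) ≤ (n : ℝ) := Nat.cast_nonneg n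
        push_cast
        linarith
    have hfzero : ∀ k : ℕ, ((k : ℝ) - 1) * p k = 0 := by
      intro k
      by_contra hne
      have hpos : 0 < ((k : ℝ) - 1) * p k := (hfnn k).lt_of_ne (Ne.symm hne)
      have := Summable.tsum_pos hfS hfnn k hpos
      rw [hftsum] at this
      exact lt_irrefl 0 this
    have hpk : ∀ k : ℕ, k ≠ 1 → p k = 0 := by
      intro k hk
      match k with
      | 0 => exact h0
      | 1 => exact absurd rfl hk
      | (n + 2) =>
        have hz := hfzero (n + 2)
        have hfac : (0 : ℝ) < ((n + 2 : ℕ) : ℝ) - 1 := by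
          have : (0 : ℝ) ≤ (n : ℝ) := Nat.cast_nonneg n
          push_cast
          linarith
        rcases mul_eq_zero.mp hz with h' | h'
        · exact absurd h' (ne_of_gt hfac)
        · exact h'
    have hone : ∑' k, p k = p 1 := tsum_eq_single 1 hpk
    rw [hpsum] at hone
    exact absurd hone.symm (ne_of_lt hp1)
  -- pgf basic facts
  have hΦS : ∀ u : ℝ, 0 ≤ u → u ≤ 1 → Summable (fun k : ℕ => p k * u ^ k) := by
    intro u hu0 hu1
    refine Summable.of_nonneg_of_le (fun k => mul_nonneg (hp k) (pow_nonneg hu0 k)) (fun k => ?_) hpS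
    calc p k * u ^ k ≤ p k * 1 :=
          mul_le_mul_of_nonneg_left (pow_le_one₀ hu0 hu1) (hp k)
      _ = p k := mul_one _
  have hΦge : ∀ u : ℝ, 0 ≤ u → u ≤ 1 → p 0 ≤ ∑' k : ℕ, p k * u ^ k := by
    intro u hu0 hu1
    have h := Summable.le_tsum (hΦS u hu0 hu1) 0 (fun j _ => mul_nonneg (hp j) (pow_nonneg hu0 j))
    simpa using h
  have hΦpos : ∀ u : ℝ, 0 ≤ u → u ≤ 1 → 0 < ∑' k : ℕ, p k * u ^ k :=
    fun u hu0 hu1 => lt_of_lt_of_le hp0 (hΦge u hu0 hu1)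
  -- key lower bound: Φ(u) ≥ u + p 0 * (1-u)^2
  have hΦkey : ∀ u : ℝ, 0 ≤ u → u ≤ 1 →
      u + p 0 * (1 - u) ^ 2 ≤ ∑' k : ℕ, p k * u ^ k := by
    intro u hu0 hu1
    set h : ℕ → ℝ :=
      fun k => (p k * u ^ k - p k * u) + ((k : ℝ) * p k - p k) * (u * (1 - u)) with hhdef
    have hS1 := hΦS u hu0 hu1
    have hS2 := hpS.mul_right u
    have hS3 : Summable (fun k : ℕ => ((k : ℝ) * p k - p k) * (u * (1 - u))) :=
      (hkS.sub hpS).mul_right _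
    have hhS : Summable h := (hS1.sub hS2).add hS3
    have hht : ∑' k, h k = (∑' k : ℕ, p k * u ^ k) - u := by
      rw [hhdef, Summable.tsum_add (hS1.sub hS2) hS3, Summable.tsum_sub hS1 hS2, tsum_mul_right,
        tsum_mul_right, Summable.tsum_sub hkS hpS, hcrit, hpsum]
      ring
    have hhnn : ∀ k, 0 ≤ h k := by
      intro k
      match k with
      | 0 =>
        simp only [hhdef, pow_zero, Nat.cast_zero]
        nlinarith [hp0.le, sq_nonneg (1 - u)]
      | (n + 1) =>
        have hkey := one_sub_pow_le_aux hu0 hu1 n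
        simp only [hhdef]
        have hexp : (p (n+1) * u ^ (n+1) - p (n+1) * u)
            + (((n+1 : ℕ) : ℝ) * p (n+1) - p (n+1)) * (u * (1 - u))
            = p (n+1) * u * ((u ^ n - 1) + (n : ℝ) * (1 - u)) := by
          push_cast
          ring
        rw [hexp]
        apply mul_nonneg (mul_nonneg (hp _) hu0)
        linarith
    have h0le : h 0 ≤ ∑' k, h k := Summable.le_tsum hhS 0 (fun j _ => hhnn j)
    have h0eq : h 0 = p 0 * (1 - u) ^ 2 := by
      simp only [hhdef, pow_zero, Nat.cast_zero]
      ring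
    rw [h0eq, hht] at h0le
    linarith
  -- Lipschitz bound
  have hΦlip : ∀ s t : ℝ, 0 ≤ s → s ≤ t → t ≤ 1 →
      (∑' k : ℕ, p k * t ^ k) - (∑' k : ℕ, p k * s ^ k) ≤ t - s := by
    intro s t hs0 hst ht1
    have hSs := hΦS s hs0 (hst.trans ht1)
    have hSt := hΦS t (hs0.trans hst) ht1
    rw [← Summable.tsum_sub hSt hSs]
    have hR : Summable (fun k : ℕ => ((k : ℝ) * p k) * (t - s)) := hkS.mul_right _
    calc (∑' k : ℕ, (p k * t ^ k - p k * s ^ k))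
        ≤ ∑' k : ℕ, ((k : ℝ) * p k) * (t - s) := by
          apply Summable.tsum_le_tsum _ (hSt.sub hSs) hR
          intro k
          have hps := pow_sub_pow_le_aux hs0 hst ht1 k
          calc p k * t ^ k - p k * s ^ k = p k * (t ^ k - s ^ k) := by ring
            _ ≤ p k * ((k : ℝ) * (t - s)) := mul_le_mul_of_nonneg_left hps (hp k)
            _ = ((k : ℝ) * p k) * (t - s) := by ring
      _ = (∑' k : ℕ, (k : ℝ) * p k) * (t - s) := tsum_mul_right
      _ = t - s := by rw [hcrit]; ring
  -- continuity
  have hΦcont : ContinuousOn (fun t : ℝ => ∑' k : ℕ, p k * t ^ k) (Icc 0 1) := by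
    apply continuousOn_tsum
      (fun k => (continuous_const.mul (continuous_pow k)).continuousOn) hpS
    intro k x hx
    rw [Real.norm_eq_abs]; show |p k * x ^ k| ≤ p k; rw [abs_of_nonneg (mul_nonneg (hp k) (pow_nonneg hx.1 k))]
    calc p k * x ^ k ≤ p k * 1 :=
          mul_le_mul_of_nonneg_left (pow_le_one₀ hx.1 hx.2) (hp k)
      _ = p k := mul_one _
  have hcontg : ContinuousOn (fun t : ℝ => t / ∑' k : ℕ, p k * t ^ k) (Icc 0 1) :=
    ContinuousOn.div continuousOn_id hΦcont
      (fun x hx => ne_of_gt (hΦpos x hx.1 hx.2))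
  -- strict monotonicity
  have hmonog : StrictMonoOn (fun t : ℝ => t / ∑' k : ℕ, p k * t ^ k) (Icc 0 1) := by
    intro s hs t ht hst
    have hΦs := hΦpos s hs.1 hs.2
    have hΦt := hΦpos t ht.1 ht.2
    simp only
    rw [div_lt_div_iff₀ hΦs hΦt]
    have hA := hΦkey s hs.1 hs.2
    have hB := hΦlip s t hs.1 hst.le ht.2
    have hs1 : s < 1 := lt_of_lt_of_le hst ht.2
    nlinarith [mul_le_mul_of_nonneg_left hB hs.1,
      mul_le_mul_of_nonneg_left hA (sub_pos.mpr hst).le,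
      mul_pos (mul_pos (sub_pos.mpr hst) hp0) (pow_pos (sub_pos.mpr hs1) 2)]
  -- maps to
  have hmaps : MapsTo (fun t : ℝ => t / ∑' k : ℕ, p k * t ^ k) (Icc 0 1) (Icc 0 1) := by
    intro t ht
    have hΦt := hΦpos t ht.1 ht.2
    constructor
    · exact div_nonneg ht.1 hΦt.le
    · rw [div_le_one hΦt]
      have := hΦkey t ht.1 ht.2
      nlinarith [mul_nonneg hp0.le (sq_nonneg (1 - t))]
  -- surjectivity
  have hΦ1 : (∑' k : ℕ, p k * (1 : ℝ) ^ k) = 1 := by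
    simp only [one_pow, mul_one]
    exact hpsum
  have hsurj : SurjOn (fun t : ℝ => t / ∑' k : ℕ, p k * t ^ k) (Icc 0 1) (Icc 0 1) := by
    have h := intermediate_value_Icc (by norm_num : (0:ℝ) ≤ 1) hcontg
    rw [hΦ1, zero_div, div_one] at h
    exact h
  -- facts about y
  have hY : ∀ z ∈ Icc (0:ℝ) 1,
      (0 ≤ ∑' n, q n * z ^ n) ∧ (∑' n, q n * z ^ n) ≤ 1 := by
    intro z hz
    have hnn : ∀ n, 0 ≤ q n * z ^ n := fun n => mul_nonneg (hqnn n) (pow_nonneg hz.1 n)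
    have hle : ∀ n, q n * z ^ n ≤ q n := fun n => by
      calc q n * z ^ n ≤ q n * 1 :=
            mul_le_mul_of_nonneg_left (pow_le_one₀ hz.1 hz.2) (hqnn n)
        _ = q n := mul_one _
    have hS : Summable (fun n => q n * z ^ n) :=
      Summable.of_nonneg_of_le hnn hle hqS
    refine ⟨tsum_nonneg hnn, ?_⟩
    calc (∑' n, q n * z ^ n) ≤ ∑' n, q n := Summable.tsum_le_tsum hle hS hqS
      _ = 1 := hqsum
  refine ⟨hcontg, hmonog, ⟨hmaps, hmonog.injOn, hsurj⟩, ?_, ?_⟩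
  · -- y (g t) = t
    intro t ht
    have hz : t / (∑' k : ℕ, p k * t ^ k) ∈ Icc (0:ℝ) 1 := hmaps ht
    set z := t / (∑' k : ℕ, p k * t ^ k) with hzdef
    have hu := hY z hz
    have hfz := hfix z hz
    have hΦu : 0 < ∑' k : ℕ, p k * (∑' n, q n * z ^ n) ^ k := hΦpos _ hu.1 hu.2
    have hgu : (∑' n, q n * z ^ n) / (∑' k : ℕ, p k * (∑' n, q n * z ^ n) ^ k) = z := by
      rw [div_eq_iff (ne_of_gt hΦu)]
      exact hfz
    exact hmonog.injOn ⟨hu.1, hu.2⟩ ht (hgu.trans hzdef)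
  · -- g (y z) = z
    intro z hz
    have hu := hY z hz
    have hΦu : 0 < ∑' k : ℕ, p k * (∑' n, q n * z ^ n) ^ k := hΦpos _ hu.1 hu.2
    rw [div_eq_iff (ne_of_gt hΦu)]
    exact hfix z hz
end

section
/- Let (p_k^{(1)}) and (p_k^{(2)}) be critical offspring distributions, each with p_1 < 1, with pgfs Φ_1, Φ_2 and tree-size generating functions y_1, y_2. Then Φ_1(t) ≤ Φ_2(t) for all t ∈ (0,1) if and only if y_1(t) ≤ y_2(t) for all t ∈ (0,1). -/
open Set

private lemma sum1_summable {p : ℕ → ℝ} (h : ∑' k, p k = 1) : Summable p := by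
  by_contra hs
  rw [tsum_eq_zero_of_not_summable hs] at h
  norm_num at h

private lemma summable_pow {p : ℕ → ℝ} (hp : ∀ k, 0 ≤ p k) (hs : Summable p)
    {u : ℝ} (hu0 : 0 ≤ u) (hu1 : u ≤ 1) : Summable (fun k => p k * u ^ k) :=
  hs.of_nonneg_of_le (fun k => mul_nonneg (hp k) (pow_nonneg hu0 k))
    (fun k => mul_le_of_le_one_right (hp k) (pow_le_one₀ hu0 hu1))

private lemma phi_convex {p : ℕ → ℝ} (hp : ∀ k, 0 ≤ p k) (hs : Summable p) :
    ConvexOn ℝ (Icc (0:ℝ) 1) (fun u => ∑' k, p k * u ^ k) := by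
  refine ⟨convex_Icc 0 1, fun x hx y hy a b ha hb hab => ?_⟩
  simp only [smul_eq_mul]
  have hxy : a * x + b * y ∈ Icc (0:ℝ) 1 := (convex_Icc 0 1) hx hy ha hb hab
  have hsx := summable_pow hp hs hx.1 hx.2
  have hsy := summable_pow hp hs hy.1 hy.2
  calc ∑' k, p k * (a*x+b*y)^k
      ≤ ∑' k, (a * (p k * x^k) + b * (p k * y^k)) := by
        refine Summable.tsum_le_tsum (fun k => ?_) (summable_pow hp hs hxy.1 hxy.2)
          ((hsx.mul_left a).add (hsy.mul_left b))
        have h1 := (convexOn_pow k).2 (mem_Ici.mpr hx.1) (mem_Ici.mpr hy.1) ha hb hab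
        simp only [smul_eq_mul] at h1
        nlinarith [hp k]
      _ = a * ∑' k, p k * x^k + b * ∑' k, p k * y^k := by
        rw [Summable.tsum_add (hsx.mul_left a) (hsy.mul_left b), tsum_mul_left, tsum_mul_left]

private lemma p0_pos {p : ℕ → ℝ} (hp : ∀ k, 0 ≤ p k) (hsum : ∑' k, p k = 1)
    (hcrit : ∑' k : ℕ, (k:ℝ) * p k = 1) (hp1 : p 1 < 1) : 0 < p 0 := by
  rcases (hp 0).lt_or_eq with h | h
  · exact h
  exfalso
  have hs : Summable p := sum1_summable hsum
  have hsk : Summable (fun k : ℕ => (k:ℝ) * p k) := sum1_summable hcrit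
  have hg : Summable (fun k : ℕ => ((k:ℝ) - 1) * p k) := by
    have := hsk.sub hs
    convert this using 2 with k
    exacts [rfl, by ring]
  have hgt : ∑' k : ℕ, ((k:ℝ) - 1) * p k = 0 := by
    have h2 : ∑' k : ℕ, ((k:ℝ) * p k - p k) = 1 - 1 := by
      rw [Summable.tsum_sub hsk hs, hcrit, hsum]
    rw [sub_self] at h2
    rw [← h2]
    congr 1 with k; ring
  have hgn : ∀ k : ℕ, 0 ≤ ((k:ℝ) - 1) * p k := by
    intro k
    match k with
    | 0 => simp [← h]
    | (n+1) =>
      apply mul_nonneg _ (hp _)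
      simp
  have hzero : ∀ k : ℕ, ((k:ℝ) - 1) * p k = 0 := by
    intro k
    refine le_antisymm ?_ (hgn k)
    calc ((k:ℝ)-1) * p k ≤ ∑' j : ℕ, ((j:ℝ)-1) * p j := Summable.le_tsum hg k (fun j _ => hgn j)
    _ = 0 := hgt
  have hpk : ∀ k, 2 ≤ k → p k = 0 := by
    intro k hk
    have := hzero k
    have hk1 : ((k:ℝ) - 1) ≠ 0 := by
      have : (2:ℝ) ≤ k := by exact_mod_cast hk
      linarith
    exact (mul_eq_zero.mp this).resolve_left hk1
  have : ∑' k, p k = p 0 + p 1 := by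
    rw [tsum_eq_sum (s := {0, 1}) (by intro b hb; simp at hb; exact hpk b (by omega))]
    simp
  rw [hsum, ← h] at this
  linarith

private lemma y_contOn {q : ℕ → ℝ} (hq : ∀ n, 0 ≤ q n) (hs : Summable q) :
    ContinuousOn (fun t : ℝ => ∑' n, q n * t ^ n) (Icc 0 1) := by
  rw [continuousOn_iff_continuous_restrict]
  have : (Icc (0:ℝ) 1).domRestrict (fun t => ∑' n, q n * t ^ n)
      = fun x : Icc (0:ℝ) 1 => ∑' n, q n * (x:ℝ) ^ n := rfl
  rw [this]
  refine continuous_tsum (fun n => by continuity) hs (fun n x => ?_)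
  rw [Real.norm_eq_abs, abs_of_nonneg (mul_nonneg (hq n) (pow_nonneg x.2.1 n))]
  exact mul_le_of_le_one_right (hq n) (pow_le_one₀ x.2.1 x.2.2)

/-- y(t) ≤ t on [0,1]. -/
private lemma y_le_t {q : ℕ → ℝ} (hq0 : q 0 = 0) (hq : ∀ n, 0 ≤ q n)
    (hqsum : ∑' n, q n = 1) {t : ℝ} (ht0 : 0 ≤ t) (ht1 : t ≤ 1) :
    (∑' n, q n * t ^ n) ≤ t := by
  have hs : Summable q := sum1_summable hqsum
  have h1 : (∑' n, q n * t ^ n) ≤ ∑' n, q n * t := by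
    refine Summable.tsum_le_tsum (fun n => ?_) (summable_pow hq hs ht0 ht1) (hs.mul_right t)
    match n with
    | 0 => simp [hq0]
    | (m+1) =>
      exact mul_le_mul_of_nonneg_left
        (by simpa using pow_le_pow_of_le_one ht0 ht1 (Nat.one_le_iff_ne_zero.mpr (Nat.succ_ne_zero m))) (hq _)
  calc (∑' n, q n * t ^ n) ≤ ∑' n, q n * t := h1
    _ = (∑' n, q n) * t := by rw [tsum_mul_right]
    _ = t := by rw [hqsum, one_mul]

private lemma y_nonneg {q : ℕ → ℝ} (hq : ∀ n, 0 ≤ q n) {t : ℝ} (ht0 : 0 ≤ t) :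
    0 ≤ ∑' n, q n * t ^ n :=
  tsum_nonneg (fun n => mul_nonneg (hq n) (pow_nonneg ht0 n))

/-- p 0 ≤ Φ(u) for u ∈ [0,1]. -/
private lemma phi_ge_p0 {p : ℕ → ℝ} (hp : ∀ k, 0 ≤ p k) (hs : Summable p)
    {u : ℝ} (hu0 : 0 ≤ u) (hu1 : u ≤ 1) : p 0 ≤ ∑' k, p k * u ^ k := by
  have := Summable.le_tsum (summable_pow hp hs hu0 hu1) 0
    (fun j _ => mul_nonneg (hp j) (pow_nonneg hu0 j))
  simpa using this

/-- Forward direction, one-sided. -/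
private lemma dir1
    (p₁ p₂ : ℕ → ℝ) (hp₁ : ∀ k, 0 ≤ p₁ k) (hp₂ : ∀ k, 0 ≤ p₂ k)
    (hpsum₁ : ∑' k, p₁ k = 1) (hpsum₂ : ∑' k, p₂ k = 1)
    (hcrit₂ : ∑' k : ℕ, (k : ℝ) * p₂ k = 1)
    (hp₂1 : p₂ 1 < 1)
    (q₁ q₂ : ℕ → ℝ)
    (hq₁0 : q₁ 0 = 0) (hq₂0 : q₂ 0 = 0)
    (hq₁nn : ∀ n, 0 ≤ q₁ n) (hq₂nn : ∀ n, 0 ≤ q₂ n)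
    (hq₁sum : ∑' n, q₁ n = 1) (hq₂sum : ∑' n, q₂ n = 1)
    (hfix₁ : ∀ z ∈ Set.Icc (0:ℝ) 1,
      (∑' n, q₁ n * z ^ n) = z * ∑' k, p₁ k * (∑' n, q₁ n * z ^ n) ^ k)
    (hfix₂ : ∀ z ∈ Set.Icc (0:ℝ) 1,
      (∑' n, q₂ n * z ^ n) = z * ∑' k, p₂ k * (∑' n, q₂ n * z ^ n) ^ k)
    (hΦ : ∀ t ∈ Set.Ioo (0:ℝ) 1, (∑' k, p₁ k * t ^ k) ≤ ∑' k, p₂ k * t ^ k) :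
    ∀ t ∈ Set.Ioo (0:ℝ) 1, (∑' n, q₁ n * t ^ n) ≤ ∑' n, q₂ n * t ^ n := by
  intro t ht
  obtain ⟨ht0, ht1⟩ := ht
  have htI : t ∈ Icc (0:ℝ) 1 := ⟨ht0.le, ht1.le⟩
  have hs₁ : Summable p₁ := sum1_summable hpsum₁
  have hs₂ : Summable p₂ := sum1_summable hpsum₂
  set a := ∑' n, q₁ n * t ^ n with ha
  set b := ∑' n, q₂ n * t ^ n with hb
  have ha0 : 0 ≤ a := y_nonneg hq₁nn ht0.le
  have hb0 : 0 ≤ b := y_nonneg hq₂nn ht0.le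
  have hat : a ≤ t := y_le_t hq₁0 hq₁nn hq₁sum ht0.le ht1.le
  have hbt : b ≤ t := y_le_t hq₂0 hq₂nn hq₂sum ht0.le ht1.le
  have ha1 : a < 1 := lt_of_le_of_lt hat ht1
  have hb1 : b < 1 := lt_of_le_of_lt hbt ht1
  have hfa : a = t * ∑' k, p₁ k * a ^ k := hfix₁ t htI
  have hfb : b = t * ∑' k, p₂ k * b ^ k := hfix₂ t htI
  -- b > 0
  have hbpos : 0 < b := by
    have hp20 : 0 < p₂ 0 := p0_pos hp₂ hpsum₂ hcrit₂ hp₂1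
    have := phi_ge_p0 hp₂ hs₂ hb0 hb1.le
    calc (0:ℝ) < t * p₂ 0 := mul_pos ht0 hp20
      _ ≤ t * ∑' k, p₂ k * b ^ k := mul_le_mul_of_nonneg_left this ht0.le
      _ = b := hfb.symm
  by_contra hcon
  push_neg at hcon   -- b < a
  set c := (1 - a) / (1 - b) with hc
  set d := (a - b) / (1 - b) with hd
  have h1b : (0:ℝ) < 1 - b := by linarith
  have hc0 : 0 ≤ c := div_nonneg (by linarith) h1b.le
  have hd0 : 0 < d := div_pos (by linarith) h1b
  have hcd : c + d = 1 := by
    rw [hc, hd, ← add_div, div_eq_one_iff_eq (ne_of_gt h1b)]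
    ring
  have hcb : c * b + d * 1 = a := by
    rw [hc, hd, div_mul_eq_mul_div, mul_one, ← add_div,
      div_eq_iff (ne_of_gt h1b)]
    ring
  have hconv := (phi_convex hp₁ hs₁).2 (x := b) ⟨hb0, hb1.le⟩ (y := 1)
    ⟨zero_le_one, le_refl 1⟩ hc0 hd0.le hcd
  simp only [smul_eq_mul, hcb] at hconv
  have hphi1 : (∑' k, p₁ k * (1:ℝ) ^ k) = 1 := by simpa using hpsum₁
  rw [hphi1] at hconv
  -- hconv : Φ₁ a ≤ c * Φ₁ b + d * 1
  have e1 : t * (∑' k, p₁ k * a ^ k) ≤ t * (c * (∑' k, p₁ k * b ^ k) + d * 1) :=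
    mul_le_mul_of_nonneg_left hconv ht0.le
  have e2 : t * (∑' k, p₁ k * b ^ k) ≤ t * ∑' k, p₂ k * b ^ k :=
    mul_le_mul_of_nonneg_left (hΦ b ⟨hbpos, hb1⟩) ht0.le
  have e2' : c * (t * (∑' k, p₁ k * b ^ k)) ≤ c * (t * ∑' k, p₂ k * b ^ k) :=
    mul_le_mul_of_nonneg_left e2 hc0
  have e3 : d * t < d * 1 := by
    exact mul_lt_mul_of_pos_left ht1 hd0
  nlinarith [e1, e2', e3, hfa, hfb, hcb]

/-- Converse direction, one-sided. -/
private lemma dir2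
    (p₁ p₂ : ℕ → ℝ) (hp₁ : ∀ k, 0 ≤ p₁ k) (hp₂ : ∀ k, 0 ≤ p₂ k)
    (hpsum₁ : ∑' k, p₁ k = 1)
    (q₁ q₂ : ℕ → ℝ)
    (hq₁0 : q₁ 0 = 0) (hq₂0 : q₂ 0 = 0)
    (hq₁nn : ∀ n, 0 ≤ q₁ n) (hq₂nn : ∀ n, 0 ≤ q₂ n)
    (hq₁sum : ∑' n, q₁ n = 1) (hq₂sum : ∑' n, q₂ n = 1)
    (hfix₁ : ∀ z ∈ Set.Icc (0:ℝ) 1,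
      (∑' n, q₁ n * z ^ n) = z * ∑' k, p₁ k * (∑' n, q₁ n * z ^ n) ^ k)
    (hfix₂ : ∀ z ∈ Set.Icc (0:ℝ) 1,
      (∑' n, q₂ n * z ^ n) = z * ∑' k, p₂ k * (∑' n, q₂ n * z ^ n) ^ k)
    (hy : ∀ t ∈ Set.Ioo (0:ℝ) 1, (∑' n, q₁ n * t ^ n) ≤ ∑' n, q₂ n * t ^ n) :
    ∀ s ∈ Set.Ioo (0:ℝ) 1, (∑' k, p₁ k * s ^ k) ≤ ∑' k, p₂ k * s ^ k := by
  intro s hsI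
  obtain ⟨hs0, hs1⟩ := hsI
  have hs₁ : Summable p₁ := sum1_summable hpsum₁
  have hsq₂ : Summable q₂ := sum1_summable hq₂sum
  -- surjectivity of y₂ onto [0,1] via IVT
  have hY0 : (∑' n, q₂ n * (0:ℝ) ^ n) = 0 := by
    rw [tsum_eq_single 0 (fun n hn => by simp [zero_pow hn])]
    simp [hq₂0]
  have hY1 : (∑' n, q₂ n * (1:ℝ) ^ n) = 1 := by simpa using hq₂sum
  have hsub := intermediate_value_Icc (zero_le_one (α := ℝ)) (y_contOn hq₂nn hsq₂)
  have hmem : s ∈ Icc ((fun t : ℝ => ∑' n, q₂ n * t ^ n) 0)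
      ((fun t : ℝ => ∑' n, q₂ n * t ^ n) 1) := by
    simp only [hY0, hY1]
    exact ⟨hs0.le, hs1.le⟩
  obtain ⟨t, htI, hyt⟩ := hsub hmem
  -- hyt : y₂ t = s
  have ht0 : 0 < t := by
    rcases htI.1.lt_or_eq with h | h
    · exact h
    · exfalso; rw [← h] at hyt; simp only at hyt; rw [hY0] at hyt; linarith
  have ht1 : t < 1 := by
    rcases htI.2.lt_or_eq with h | h
    · exact h
    · exfalso; rw [h] at hyt; simp only at hyt; rw [hY1] at hyt; linarith
  set a := ∑' n, q₁ n * t ^ n with ha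
  have ha0 : 0 ≤ a := y_nonneg hq₁nn ht0.le
  have hat : a ≤ t := y_le_t hq₁0 hq₁nn hq₁sum ht0.le ht1.le
  have ha1 : a < 1 := lt_of_le_of_lt hat ht1
  have has : a ≤ s := by
    have := hy t ⟨ht0, ht1⟩
    simp only at hyt
    rw [hyt] at this
    exact this
  have hfa : a = t * ∑' k, p₁ k * a ^ k := hfix₁ t htI
  have hfs : s = t * ∑' k, p₂ k * s ^ k := by
    have := hfix₂ t htI
    simp only at hyt
    rw [hyt] at this
    exact this
  set c := (1 - s) / (1 - a) with hc
  set d := (s - a) / (1 - a) with hd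
  have h1a : (0:ℝ) < 1 - a := by linarith
  have hc0 : 0 ≤ c := div_nonneg (by linarith) h1a.le
  have hd0 : 0 ≤ d := div_nonneg (by linarith) h1a.le
  have hcd : c + d = 1 := by
    rw [hc, hd, ← add_div, div_eq_one_iff_eq (ne_of_gt h1a)]
    ring
  have hca : c * a + d * 1 = s := by
    rw [hc, hd, div_mul_eq_mul_div, mul_one, ← add_div,
      div_eq_iff (ne_of_gt h1a)]
    ring
  have hconv := (phi_convex hp₁ hs₁).2 (x := a) ⟨ha0, ha1.le⟩ (y := 1)
    ⟨zero_le_one, le_refl 1⟩ hc0 hd0 hcd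
  simp only [smul_eq_mul, hca] at hconv
  have hphi1 : (∑' k, p₁ k * (1:ℝ) ^ k) = 1 := by simpa using hpsum₁
  rw [hphi1] at hconv
  -- hconv : Φ₁ s ≤ c * Φ₁ a + d * 1
  have e1 : t * (∑' k, p₁ k * s ^ k) ≤ t * (c * (∑' k, p₁ k * a ^ k) + d * 1) :=
    mul_le_mul_of_nonneg_left hconv ht0.le
  have e2 : d * t ≤ d * 1 := mul_le_mul_of_nonneg_left ht1.le hd0
  have final : t * (∑' k, p₁ k * s ^ k) ≤ t * ∑' k, p₂ k * s ^ k := by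
    nlinarith [e1, e2, hfa, hfs, hca]
  exact le_of_mul_le_mul_left final ht0

/-- For two critical offspring distributions (each with `p 1 < 1`), with pgfs
`Φᵢ` and tree-size generating functions `yᵢ`, one has `Φ₁ ≤ Φ₂` on `(0,1)` iff `y₁ ≤ y₂`
on `(0,1)`. -/
theorem stmt1
    (p₁ p₂ : ℕ → ℝ) (hp₁ : ∀ k, 0 ≤ p₁ k) (hp₂ : ∀ k, 0 ≤ p₂ k)
    (hpsum₁ : ∑' k, p₁ k = 1) (hpsum₂ : ∑' k, p₂ k = 1)
    (hcrit₁ : ∑' k : ℕ, (k : ℝ) * p₁ k = 1) (hcrit₂ : ∑' k : ℕ, (k : ℝ) * p₂ k = 1)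
    (hp₁1 : p₁ 1 < 1) (hp₂1 : p₂ 1 < 1)
    (q₁ q₂ : ℕ → ℝ)
    (hq₁0 : q₁ 0 = 0) (hq₂0 : q₂ 0 = 0)
    (hq₁nn : ∀ n, 0 ≤ q₁ n) (hq₂nn : ∀ n, 0 ≤ q₂ n)
    (hq₁sum : ∑' n, q₁ n = 1) (hq₂sum : ∑' n, q₂ n = 1)
    (hfix₁ : ∀ z ∈ Set.Icc (0:ℝ) 1,
      (∑' n, q₁ n * z ^ n) = z * ∑' k, p₁ k * (∑' n, q₁ n * z ^ n) ^ k)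
    (hfix₂ : ∀ z ∈ Set.Icc (0:ℝ) 1,
      (∑' n, q₂ n * z ^ n) = z * ∑' k, p₂ k * (∑' n, q₂ n * z ^ n) ^ k) :
    (∀ t ∈ Set.Ioo (0:ℝ) 1, (∑' k, p₁ k * t ^ k) ≤ ∑' k, p₂ k * t ^ k) ↔
    (∀ t ∈ Set.Ioo (0:ℝ) 1, (∑' n, q₁ n * t ^ n) ≤ ∑' n, q₂ n * t ^ n) := by
  constructor
  · exact dir1 p₁ p₂ hp₁ hp₂ hpsum₁ hpsum₂ hcrit₂ hp₂1 q₁ q₂ hq₁0 hq₂0 hq₁nn hq₂nn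
      hq₁sum hq₂sum hfix₁ hfix₂
  · exact dir2 p₁ p₂ hp₁ hp₂ hpsum₁ q₁ q₂ hq₁0 hq₂0 hq₁nn hq₂nn
      hq₁sum hq₂sum hfix₁ hfix₂
end

section
/- Let (p_k)_{k≥0} be a critical offspring distribution with variance σ² ∈ (0,∞) and pgf Φ. Then for every complex α with Re α < 1/2, the series μ(α) = ∑_{n≥1} n^α q_n converges absolutely and μ(α) = Γ(1−α)^{-1} ∫_0^1 [log(Φ(η)/η)]^{−α} dη, where for η ∈ (0,1) one has Φ(η)/η > 1 so that [log(Φ(η)/η)]^{−α} = exp(−α·log log(Φ(η)/η)) is well defined. -/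
open MeasureTheory Set

section Aux
private lemma aux_pow_diff (k : ℕ) {a b : ℝ} (h0 : 0 ≤ a) (hab : a ≤ b) (hb : b ≤ 1) :
    b ^ k - a ^ k ≤ k * (b - a) := by
  induction k with
  | zero => simp
  | succ n ih =>
    have hb0 : 0 ≤ b := le_trans h0 hab
    have han : a ^ n ≤ 1 := pow_le_one₀ h0 (le_trans hab hb)
    have hpow : a ^ n ≤ b ^ n := pow_le_pow_left₀ h0 hab n
    have key : b ^ (n+1) - a ^ (n+1) = b * (b ^ n - a ^ n) + (b - a) * a ^ n := by ring
    push_cast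
    nlinarith [pow_nonneg h0 n, pow_nonneg hb0 n]

private lemma aux_pow_nonneg (k : ℕ) {x : ℝ} (hx0 : 0 ≤ x) (hx1 : x ≤ 1) :
    0 ≤ x ^ k - 1 + k * (1 - x) := by
  induction k with
  | zero => simp
  | succ n ih =>
    have hxn : x ^ n ≤ 1 := pow_le_one₀ hx0 hx1
    have : x ^ (n+1) - x ^ n = -(1 - x) * x ^ n := by ring
    push_cast
    nlinarith [pow_nonneg hx0 n]

private lemma aux_pow_lb {k : ℕ} (hk : 2 ≤ k) {x : ℝ} (hx0 : 0 ≤ x) (hx1 : x ≤ 1) :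
    (1 - x) ^ 2 ≤ x ^ k - 1 + k * (1 - x) := by
  induction k, hk using Nat.le_induction with
  | base => push_cast; ring_nf; nlinarith
  | succ n hn ih =>
    have hxn : x ^ n ≤ 1 := pow_le_one₀ hx0 hx1
    have hs : x ^ (n+1) = x ^ n * x := pow_succ x n
    have hm : 0 ≤ (1 - x) * (1 - x ^ n) := mul_nonneg (by linarith) (by linarith)
    push_cast
    push_cast at ih
    nlinarith [pow_nonneg hx0 n]
end Aux

set_option maxHeartbeats 4000000 in
/-- For a critical offspring distribution with variance `σ² ∈ (0,∞)` and pgf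
`Φ`, for every complex `α` with `Re α < 1/2` the series `μ(α) = ∑ n^α q_n` converges
absolutely and `μ(α) = Γ(1−α)⁻¹ ∫_0^1 (log(Φ(η)/η))^{-α} dη`. -/
theorem stmt5
    (p : ℕ → ℝ) (hp : ∀ k, 0 ≤ p k)
    (hpsum : ∑' k, p k = 1)
    (hcrit : ∑' k : ℕ, (k : ℝ) * p k = 1)
    (hσfin : Summable (fun k : ℕ => (k : ℝ) * ((k : ℝ) - 1) * p k))
    (hσpos : 0 < ∑' k : ℕ, (k : ℝ) * ((k : ℝ) - 1) * p k)
    (q : ℕ → ℝ) (hq0 : q 0 = 0) (hqnn : ∀ n, 0 ≤ q n)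
    (hqsum : ∑' n, q n = 1)
    (hfix : ∀ z ∈ Set.Icc (0:ℝ) 1,
      (∑' n, q n * z ^ n) = z * ∑' k, p k * (∑' n, q n * z ^ n) ^ k)
    (α : ℂ) (hα : α.re < 1/2) :
    Summable (fun n : ℕ => ‖(n : ℂ) ^ α * (q n : ℂ)‖) ∧
    (∑' n : ℕ, (n : ℂ) ^ α * (q n : ℂ)) =
      (Complex.Gamma (1 - α))⁻¹ *
        ∫ η in (0:ℝ)..1, ((Real.log ((∑' k, p k * η ^ k) / η) : ℂ)) ^ (-α) := by
  classical
  set β : ℝ := α.re with hβdef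
  have hβ : β < 1/2 := hα
  -- summability of the basic series
  have hpS : Summable p := by
    by_contra h; rw [tsum_eq_zero_of_not_summable h] at hpsum; norm_num at hpsum
  have hqS : Summable q := by
    by_contra h; rw [tsum_eq_zero_of_not_summable h] at hqsum; norm_num at hqsum
  have hkpS : Summable (fun k : ℕ => (k : ℝ) * p k) := by
    by_contra h; rw [tsum_eq_zero_of_not_summable h] at hcrit; norm_num at hcrit
  -- a k₀ ≥ 2 with p k₀ > 0
  obtain ⟨k0, hk0⟩ : ∃ k : ℕ, 0 < (k : ℝ) * ((k : ℝ) - 1) * p k := by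
    by_contra h; push_neg at h
    exact absurd (tsum_nonpos h) (by linarith)
  have hk02 : 2 ≤ k0 := by
    by_contra h
    interval_cases k0 <;> norm_num at hk0
  have hpk0 : 0 < p k0 := by
    rcases lt_or_ge 0 (p k0) with h | h
    · exact h
    · exfalso
      have h2 : (2:ℝ) ≤ (k0:ℝ) := by exact_mod_cast hk02
      have h3 : (k0:ℝ) * ((k0:ℝ) - 1) * p k0 ≤ 0 :=
        mul_nonpos_of_nonneg_of_nonpos (by nlinarith) h
      linarith
  set c : ℝ := p k0 with hcdef
  -- an m ≥ 1 with q m > 0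
  obtain ⟨m, hqm⟩ : ∃ n : ℕ, 0 < q n := by
    by_contra h; push_neg at h
    have : ∑' n, q n ≤ 0 := tsum_nonpos h
    linarith
  have hm1 : 1 ≤ m := by
    rcases Nat.eq_zero_or_pos m with h | h
    · exfalso; rw [h, hq0] at hqm; exact lt_irrefl _ hqm
    · exact h
  have hq1 : ∀ n, q n ≤ 1 := by
    intro n
    calc q n ≤ ∑' j, q j := Summable.le_tsum hqS n (fun j _ => hqnn j)
      _ = 1 := hqsum
  -- the generating functions
  set P : ℝ → ℝ := fun x => ∑' k, p k * x ^ k with hPdef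
  set Y : ℝ → ℝ := fun z => ∑' n, q n * z ^ n with hYdef
  have hPsumm : ∀ {x : ℝ}, 0 ≤ x → x ≤ 1 → Summable (fun k => p k * x ^ k) := by
    intro x hx0 hx1
    exact hpS.of_nonneg_of_le (fun k => mul_nonneg (hp k) (pow_nonneg hx0 k))
      (fun k => mul_le_of_le_one_right (hp k) (pow_le_one₀ hx0 hx1))
  have hYsumm : ∀ {z : ℝ}, 0 ≤ z → z ≤ 1 → Summable (fun n => q n * z ^ n) := by
    intro z h0 h1
    exact hqS.of_nonneg_of_le (fun n => mul_nonneg (hqnn n) (pow_nonneg h0 n))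
      (fun n => mul_le_of_le_one_right (hqnn n) (pow_le_one₀ h0 h1))
  have hPle1 : ∀ {x : ℝ}, 0 ≤ x → x ≤ 1 → P x ≤ 1 := by
    intro x hx0 hx1
    calc P x ≤ ∑' k, p k := by
          exact Summable.tsum_le_tsum
            (fun k => mul_le_of_le_one_right (hp k) (pow_le_one₀ hx0 hx1)) (hPsumm hx0 hx1) hpS
      _ = 1 := hpsum
  -- key quadratic lower bound : c * (1-x)^2 ≤ P x - x on [0,1]
  have hPkey : ∀ {x : ℝ}, 0 ≤ x → x ≤ 1 → c * (1 - x) ^ 2 ≤ P x - x := by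
    intro x hx0 hx1
    have hsum3 : Summable (fun k : ℕ => p k * x ^ k - p k + (1 - x) * ((k : ℝ) * p k)) :=
      ((hPsumm hx0 hx1).sub hpS).add (hkpS.mul_left (1 - x))
    have hcongr : (fun k : ℕ => p k * (x ^ k - 1 + (k : ℝ) * (1 - x)))
        = fun k : ℕ => p k * x ^ k - p k + (1 - x) * ((k : ℝ) * p k) := by
      funext k; ring
    have hsum4 : Summable (fun k : ℕ => p k * (x ^ k - 1 + (k : ℝ) * (1 - x))) := by
      rw [hcongr]; exact hsum3
    have hid : P x - x = ∑' k : ℕ, p k * (x ^ k - 1 + (k : ℝ) * (1 - x)) := by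
      rw [hcongr, Summable.tsum_add ((hPsumm hx0 hx1).sub hpS) (hkpS.mul_left (1 - x)),
        Summable.tsum_sub (hPsumm hx0 hx1) hpS, tsum_mul_left, hpsum, hcrit]
      simp only [hPdef]; ring
    rw [hid]
    calc c * (1 - x) ^ 2 ≤ p k0 * (x ^ k0 - 1 + (k0 : ℝ) * (1 - x)) := by
          exact mul_le_mul_of_nonneg_left (aux_pow_lb hk02 hx0 hx1) hpk0.le
      _ ≤ ∑' k : ℕ, p k * (x ^ k - 1 + (k : ℝ) * (1 - x)) := by
          exact Summable.le_tsum hsum4 k0 (fun j _ =>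
            mul_nonneg (hp j) (aux_pow_nonneg j hx0 hx1))
  have hPgt : ∀ {x : ℝ}, 0 ≤ x → x < 1 → x < P x := by
    intro x hx0 hx1
    have h1 := hPkey hx0 hx1.le
    have h2 : 0 < c * (1 - x) ^ 2 := mul_pos hpk0 (pow_pos (by linarith) 2)
    linarith
  have hPpos : ∀ {x : ℝ}, 0 ≤ x → x < 1 → 0 < P x := by
    intro x hx0 hx1
    exact lt_of_le_of_lt hx0 (hPgt hx0 hx1)

  -- Lipschitz-type bounds for P on [0,1]
  have hPmono : ∀ {a b : ℝ}, 0 ≤ a → a ≤ b → b ≤ 1 → P a ≤ P b ∧ P b - P a ≤ b - a := by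
    intro a b h0 hab hb1
    have ha1 : a ≤ 1 := le_trans hab hb1
    have hb0 : 0 ≤ b := le_trans h0 hab
    constructor
    · exact Summable.tsum_le_tsum (fun k => mul_le_mul_of_nonneg_left (pow_le_pow_left₀ h0 hab k) (hp k))
        (hPsumm h0 ha1) (hPsumm hb0 hb1)
    · have h1 : P b ≤ ∑' k : ℕ, (p k * a ^ k + (b - a) * ((k:ℝ) * p k)) := by
        apply Summable.tsum_le_tsum _ (hPsumm hb0 hb1) ((hPsumm h0 ha1).add (hkpS.mul_left (b-a)))
        intro k
        have hd := aux_pow_diff k h0 hab hb1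
        nlinarith [hp k]
      rw [Summable.tsum_add (hPsumm h0 ha1) (hkpS.mul_left (b-a)), tsum_mul_left, hcrit] at h1
      simp only [hPdef]
      linarith [h1]
  have hPlip : ∀ {a b : ℝ}, a ∈ Icc (0:ℝ) 1 → b ∈ Icc (0:ℝ) 1 → |P a - P b| ≤ |a - b| := by
    intro a b ha hb
    rcases le_total a b with h | h
    · obtain ⟨h1, h2⟩ := hPmono ha.1 h hb.2
      rw [abs_sub_comm (P a), abs_sub_comm a b, abs_of_nonneg (by linarith), abs_of_nonneg (by linarith)]
      exact h2
    · obtain ⟨h1, h2⟩ := hPmono hb.1 h ha.2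
      rw [abs_of_nonneg (by linarith), abs_of_nonneg (by linarith)]
      exact h2
  -- basic facts about Y
  have hY01 : ∀ {z : ℝ}, 0 ≤ z → z ≤ 1 → Y z ∈ Icc (0:ℝ) 1 := by
    intro z h0 h1
    constructor
    · exact tsum_nonneg (fun n => mul_nonneg (hqnn n) (pow_nonneg h0 n))
    · calc Y z ≤ ∑' n, q n := by
            exact Summable.tsum_le_tsum (fun n => mul_le_of_le_one_right (hqnn n) (pow_le_one₀ h0 h1))
              (hYsumm h0 h1) hqS
        _ = 1 := hqsum
  have hYlt1 : ∀ {z : ℝ}, 0 ≤ z → z < 1 → Y z < 1 := by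
    intro z h0 h1
    have hlt : Y z < ∑' n, q n := by
      apply Summable.tsum_lt_tsum (i := m)
        (fun n => mul_le_of_le_one_right (hqnn n) (pow_le_one₀ h0 h1.le)) _ (hYsumm h0 h1.le) hqS
      calc q m * z ^ m < q m * 1 := by
            apply mul_lt_mul_of_pos_left _ hqm
            exact pow_lt_one₀ h0 h1 (by omega)
        _ = q m := mul_one _
    rwa [hqsum] at hlt
  have hYpos : ∀ {z : ℝ}, 0 < z → z ≤ 1 → 0 < Y z := by
    intro z h0 h1
    have hle : q m * z ^ m ≤ Y z := Summable.le_tsum (hYsumm h0.le h1) m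
      (fun j _ => mul_nonneg (hqnn j) (pow_nonneg h0.le j))
    have h2 : 0 < q m * z ^ m := mul_pos hqm (pow_pos h0 m)
    linarith
  -- fixed point property : Y (x / P x) = x on (0,1)
  have hYfix : ∀ {x : ℝ}, 0 < x → x < 1 → Y (x / P x) = x := by
    intro x hx0 hx1
    have hPx : 0 < P x := hPpos hx0.le hx1
    have hgt := hPgt hx0.le hx1
    have hz0 : 0 < x / P x := div_pos hx0 hPx
    have hz1 : x / P x < 1 := (div_lt_one hPx).mpr hgt
    have hmem : x / P x ∈ Icc (0:ℝ) 1 := ⟨hz0.le, hz1.le⟩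
    have hfp : Y (x / P x) = (x / P x) * P (Y (x / P x)) := hfix _ hmem
    have hfpx : x = (x / P x) * P x := by field_simp
    have hYmem : Y (x / P x) ∈ Icc (0:ℝ) 1 := hY01 hz0.le hz1.le
    have hxmem : x ∈ Icc (0:ℝ) 1 := ⟨hx0.le, hx1.le⟩
    have hdiff : Y (x / P x) - x = (x / P x) * (P (Y (x / P x)) - P x) := by
      calc Y (x / P x) - x = (x / P x) * P (Y (x / P x)) - (x / P x) * P x := by
            rw [← hfp, ← hfpx]
        _ = (x / P x) * (P (Y (x / P x)) - P x) := by ring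
    have key : |Y (x / P x) - x| ≤ (x / P x) * |Y (x / P x) - x| := by
      calc |Y (x / P x) - x| = (x / P x) * |P (Y (x / P x)) - P x| := by
            rw [hdiff, abs_mul, abs_of_nonneg hz0.le]
        _ ≤ (x / P x) * |Y (x / P x) - x| := by
            exact mul_le_mul_of_nonneg_left (hPlip hYmem hxmem) hz0.le
    have habs : |Y (x / P x) - x| = 0 := by nlinarith [abs_nonneg (Y (x / P x) - x)]
    have := abs_eq_zero.mp habs
    linarith [sub_eq_zero.mp this]
  -- the function g and its derivative
  set g : ℝ → ℝ := fun t => ∑' n : ℕ, q n * Real.exp (-((n:ℝ) * t)) with hgdef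
  set Fn : ℝ → ℝ := fun t => ∑' n : ℕ, (n:ℝ) * q n * Real.exp (-((n:ℝ) * t)) with hFdef
  have hexp_pow : ∀ (n : ℕ) (t : ℝ), Real.exp (-((n:ℝ) * t)) = Real.exp (-t) ^ n := by
    intro n t
    rw [← Real.exp_nat_mul]
    ring_nf
  have hexp01 : ∀ {t : ℝ}, 0 < t → Real.exp (-t) ∈ Ioo (0:ℝ) 1 := by
    intro t ht
    refine ⟨Real.exp_pos _, ?_⟩
    rw [← Real.exp_zero]
    exact Real.exp_lt_exp.mpr (by linarith)
  have hgY : ∀ t : ℝ, g t = Y (Real.exp (-t)) := by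
    intro t
    simp only [hgdef, hYdef]
    exact tsum_congr fun n => by rw [hexp_pow]
  have hgsumm : ∀ {t : ℝ}, 0 < t → Summable (fun n : ℕ => q n * Real.exp (-((n:ℝ) * t))) := by
    intro t ht
    have := hYsumm (hexp01 ht).1.le (hexp01 ht).2.le
    exact this.congr fun n => by rw [hexp_pow]
  have hFsumm : ∀ {t : ℝ}, 0 < t →
      Summable (fun n : ℕ => (n:ℝ) * q n * Real.exp (-((n:ℝ) * t))) := by
    intro t ht
    have hr : ‖Real.exp (-t)‖ < 1 := by
      rw [Real.norm_eq_abs, abs_of_pos (Real.exp_pos _)]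
      exact (hexp01 ht).2
    have hgeo : Summable (fun n : ℕ => (n:ℝ) ^ 1 * Real.exp (-t) ^ n) :=
      summable_pow_mul_geometric_of_norm_lt_one 1 hr
    apply Summable.of_nonneg_of_le _ _ hgeo
    · intro n
      exact mul_nonneg (mul_nonneg (Nat.cast_nonneg n) (hqnn n)) (Real.exp_pos _).le
    · intro n
      rw [hexp_pow, pow_one]
      have h1 : (n:ℝ) * q n ≤ (n:ℝ) := mul_le_of_le_one_right (Nat.cast_nonneg n) (hq1 n)
      exact mul_le_mul_of_nonneg_right h1 (pow_nonneg (Real.exp_pos _).le n)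
  have hFnonneg : ∀ t : ℝ, 0 ≤ Fn t := by
    intro t
    apply tsum_nonneg
    intro n
    exact mul_nonneg (mul_nonneg (Nat.cast_nonneg n) (hqnn n)) (Real.exp_pos _).le
  have hgderiv : ∀ {t : ℝ}, 0 < t → HasDerivAt g (-(Fn t)) t := by
    intro t ht
    have hmem : t ∈ Ioi (t/2) := by simp [mem_Ioi]; linarith
    have hu : Summable (fun n : ℕ => (n:ℝ) * Real.exp (-((n:ℝ) * (t/2)))) := by
      have hr : ‖Real.exp (-(t/2))‖ < 1 := by
        rw [Real.norm_eq_abs, abs_of_pos (Real.exp_pos _)]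
        exact (hexp01 (by linarith)).2
      have hgeo : Summable (fun n : ℕ => (n:ℝ) ^ 1 * Real.exp (-(t/2)) ^ n) :=
        summable_pow_mul_geometric_of_norm_lt_one 1 hr
      exact hgeo.congr fun n => by rw [← hexp_pow, pow_one]
    have hderiv_each : ∀ (n : ℕ), ∀ y ∈ Ioi (t/2),
        HasDerivAt (fun s => q n * Real.exp (-((n:ℝ) * s)))
          (q n * (Real.exp (-((n:ℝ) * y)) * -(n:ℝ))) y := by
      intro n y _
      have h1 : HasDerivAt (fun s : ℝ => -((n:ℝ) * s)) (-(n:ℝ)) y := by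
        have := (hasDerivAt_id y).const_mul (-(n:ℝ))
        simpa [neg_mul, mul_comm] using this
      exact h1.exp.const_mul (q n)
    have hbound : ∀ (n : ℕ), ∀ y ∈ Ioi (t/2),
        ‖q n * (Real.exp (-((n:ℝ) * y)) * -(n:ℝ))‖ ≤ (n:ℝ) * Real.exp (-((n:ℝ) * (t/2))) := by
      intro n y hy
      rw [Real.norm_eq_abs, abs_mul, abs_mul, abs_neg, Nat.abs_cast,
        abs_of_nonneg (hqnn n), Real.abs_exp]
      have hle : Real.exp (-((n:ℝ) * y)) ≤ Real.exp (-((n:ℝ) * (t/2))) := by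
        apply Real.exp_le_exp.mpr
        have : (n:ℝ) * (t/2) ≤ (n:ℝ) * y :=
          mul_le_mul_of_nonneg_left (le_of_lt hy) (Nat.cast_nonneg n)
        linarith
      calc q n * (Real.exp (-((n:ℝ) * y)) * n) ≤ 1 * (Real.exp (-((n:ℝ) * (t/2))) * n) := by
            apply mul_le_mul (hq1 n) _ (by positivity) one_pos.le
            exact mul_le_mul_of_nonneg_right hle (Nat.cast_nonneg n)
        _ = (n:ℝ) * Real.exp (-((n:ℝ) * (t/2))) := by ring
    have hg0 : Summable (fun n : ℕ => q n * Real.exp (-((n:ℝ) * t))) := hgsumm ht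
    have hD := hasDerivAt_tsum_of_isPreconnected hu isOpen_Ioi isPreconnected_Ioi
      hderiv_each hbound hmem hg0 hmem
    have heq : (∑' n : ℕ, q n * (Real.exp (-((n:ℝ) * t)) * -(n:ℝ))) = -(Fn t) := by
      rw [hFdef, ← tsum_neg]
      exact tsum_congr fun n => by ring
    rw [heq] at hD
    exact hD
  -- strict antitonicity and injectivity of g
  have hganti : StrictAntiOn g (Ioi (0:ℝ)) := by
    intro t1 ht1 t2 ht2 h12
    have hm0 : (0:ℝ) < m := by
      have : 0 < m := Nat.lt_of_lt_of_le Nat.zero_lt_one hm1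
      exact_mod_cast this
    show (∑' n : ℕ, q n * Real.exp (-((n:ℝ) * t2))) < ∑' n : ℕ, q n * Real.exp (-((n:ℝ) * t1))
    apply Summable.tsum_lt_tsum (i := m) _ _ (hgsumm ht2) (hgsumm ht1)
    · intro n
      apply mul_le_mul_of_nonneg_left _ (hqnn n)
      apply Real.exp_le_exp.mpr
      have h3 : (n:ℝ) * t1 ≤ (n:ℝ) * t2 := mul_le_mul_of_nonneg_left h12.le (Nat.cast_nonneg n)
      linarith
    · apply mul_lt_mul_of_pos_left _ hqm
      apply Real.exp_lt_exp.mpr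
      have h3 : (m:ℝ) * t1 < (m:ℝ) * t2 := mul_lt_mul_of_pos_left h12 hm0
      linarith
  have hginj : InjOn g (Ioi (0:ℝ)) := hganti.injOn
  -- membership and fixed point for g
  have himg_mem : ∀ {t : ℝ}, 0 < t → g t ∈ Ioo (0:ℝ) 1 := by
    intro t ht
    rw [hgY]
    exact ⟨hYpos (hexp01 ht).1 (hexp01 ht).2.le, hYlt1 (hexp01 ht).1.le (hexp01 ht).2⟩
  have hfixg : ∀ {x : ℝ}, x ∈ Ioo (0:ℝ) 1 → 0 < Real.log (P x / x) ∧ g (Real.log (P x / x)) = x := by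
    intro x hx
    have hPx : 0 < P x := hPpos hx.1.le hx.2
    have hgt := hPgt hx.1.le hx.2
    have hrat : 1 < P x / x := (one_lt_div hx.1).mpr hgt
    refine ⟨Real.log_pos hrat, ?_⟩
    rw [hgY]
    have hexp : Real.exp (-(Real.log (P x / x))) = x / P x := by
      rw [Real.exp_neg, Real.exp_log (by positivity)]
      rw [inv_div]
    rw [hexp]
    exact hYfix hx.1 hx.2
  have himg : g '' (Ioi 0) = Ioo (0:ℝ) 1 := by
    apply Subset.antisymm
    · rintro _ ⟨t, ht, rfl⟩
      exact himg_mem ht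
    · rintro x hx
      obtain ⟨hlt, hgx⟩ := hfixg hx
      exact ⟨_, hlt, hgx⟩
  have hug : ∀ {t : ℝ}, 0 < t → Real.log (P (g t) / g t) = t := by
    intro t ht
    obtain ⟨hpos, heq⟩ := hfixg (himg_mem ht)
    exact hginj hpos ht heq

  -- bounds on u x = log (P x / x)
  have hu_pos : ∀ {x : ℝ}, x ∈ Ioo (0:ℝ) 1 → 0 < Real.log (P x / x) := fun hx => (hfixg hx).1
  have hu_lb : ∀ {x : ℝ}, x ∈ Ioo (0:ℝ) 1 → c * (1 - x) ^ 2 ≤ Real.log (P x / x) := by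
    intro x hx
    have hPx : 0 < P x := hPpos hx.1.le hx.2
    have hgt := hPgt hx.1.le hx.2
    have hP1 : P x ≤ 1 := hPle1 hx.1.le hx.2.le
    have h1 : Real.log (x / P x) ≤ x / P x - 1 := Real.log_le_sub_one_of_pos (div_pos hx.1 hPx)
    have h2 : Real.log (x / P x) = - Real.log (P x / x) := by
      rw [Real.log_div (ne_of_gt hx.1) (ne_of_gt hPx), Real.log_div (ne_of_gt hPx) (ne_of_gt hx.1)]
      ring
    have h3 : 1 - x / P x ≤ Real.log (P x / x) := by rw [h2] at h1; linarith
    have h4 : P x - x ≤ 1 - x / P x := by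
      have hkey : 1 - x / P x = (P x - x) / P x := by field_simp
      rw [hkey, le_div_iff₀ hPx]
      have hnn : 0 ≤ P x - x := by linarith
      exact mul_le_of_le_one_right hnn hP1
    have h5 := hPkey hx.1.le hx.2.le
    exact le_trans h5 (le_trans h4 h3)
  have hu_ub : ∀ {x : ℝ}, x ∈ Ioo (0:ℝ) 1 → Real.log (P x / x) ≤ -Real.log x := by
    intro x hx
    have hPx : 0 < P x := hPpos hx.1.le hx.2
    have hP1 : P x ≤ 1 := hPle1 hx.1.le hx.2.le
    rw [Real.log_div (ne_of_gt hPx) (ne_of_gt hx.1)]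
    linarith [Real.log_nonpos hPx.le hP1]
  have hnorm : ∀ {x : ℝ}, x ∈ Ioo (0:ℝ) 1 →
      ‖(((Real.log (P x / x)) : ℂ)) ^ (-α)‖ = (Real.log (P x / x)) ^ (-β) := by
    intro x hx
    rw [Complex.norm_cpow_eq_rpow_re_of_pos (hu_pos hx), Complex.neg_re]
  -- continuity
  have hPcont : ContinuousOn P (Icc (0:ℝ) 1) := by
    have hl : LipschitzOnWith 1 P (Icc (0:ℝ) 1) := by
      apply LipschitzOnWith.of_dist_le_mul
      intro a ha b hb
      rw [Real.dist_eq, Real.dist_eq, NNReal.coe_one, one_mul]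
      exact hPlip ha hb
    exact hl.continuousOn
  have hucont : ContinuousOn (fun x => Real.log (P x / x)) (Ioo (0:ℝ) 1) := by
    apply ContinuousOn.log
    · exact (hPcont.mono Ioo_subset_Icc_self).div continuousOn_id
        (fun x hx => ne_of_gt hx.1)
    · intro x hx
      exact ne_of_gt (div_pos (hPpos hx.1.le hx.2) hx.1)
  have hhcont : ContinuousOn (fun x => (((Real.log (P x / x)) : ℂ)) ^ (-α)) (Ioo (0:ℝ) 1) := by
    apply ContinuousOn.cpow_const
    · exact Complex.continuous_ofReal.comp_continuousOn hucont
    · intro x hx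
      exact Complex.ofReal_mem_slitPlane.mpr (hu_pos hx)
  -- integrable majorant
  have hmajor : ∃ M : ℝ → ℝ, IntegrableOn M (Ioo (0:ℝ) 1) ∧
      ∀ x ∈ Ioo (0:ℝ) 1, (Real.log (P x / x)) ^ (-β) ≤ M x := by
    rcases le_or_gt β 0 with hb | hb
    · set ε : ℝ := (2 * (1 - β))⁻¹ with hεdef
      have h1β : (0:ℝ) < 1 - β := by linarith
      have hε : 0 < ε := by positivity
      have hh : ε * (2 * (1 - β)) = 1 := inv_mul_cancel₀ (by positivity)
      have hεβ : -1 < ε * β := by nlinarith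
      refine ⟨fun x => ε⁻¹ ^ (-β) * x ^ (ε * β), ?_, ?_⟩
      · apply Integrable.const_mul
        have hii : IntervalIntegrable (fun x : ℝ => x ^ (ε * β)) volume 0 1 :=
          intervalIntegral.intervalIntegrable_rpow' hεβ
        exact (intervalIntegrable_iff_integrableOn_Ioo_of_le zero_le_one).mp hii
      · intro x hx
        have hub' : Real.log (P x / x) ≤ ε⁻¹ * x ^ (-ε) := by
          have h1 : Real.log (P x / x) ≤ -Real.log x := hu_ub hx
          have h2 : -Real.log x = Real.log x⁻¹ := (Real.log_inv x).symm
          have h3 : Real.log x⁻¹ ≤ (x⁻¹) ^ ε / ε := Real.log_le_rpow_div (inv_nonneg.mpr hx.1.le) hε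
          have h4 : (x⁻¹ : ℝ) ^ ε = x ^ (-ε) := by
            rw [Real.inv_rpow hx.1.le, Real.rpow_neg hx.1.le]
          have h5 : (x⁻¹) ^ ε / ε = ε⁻¹ * (x⁻¹) ^ ε := by ring
          rw [h5, h4] at h3
          linarith
        have h6 : (Real.log (P x / x)) ^ (-β) ≤ (ε⁻¹ * x ^ (-ε)) ^ (-β) :=
          Real.rpow_le_rpow (hu_pos hx).le hub' (by linarith)
        have h7 : (ε⁻¹ * x ^ (-ε)) ^ (-β) = ε⁻¹ ^ (-β) * x ^ (ε * β) := by
          rw [Real.mul_rpow (inv_nonneg.mpr hε.le) (Real.rpow_nonneg hx.1.le _), ← Real.rpow_mul hx.1.le]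
          congr 2
          ring
        rw [h7] at h6
        exact h6
    · refine ⟨fun x => c ^ (-β) * (1 - x) ^ (-(2*β)), ?_, ?_⟩
      · apply Integrable.const_mul
        have h1 : IntervalIntegrable (fun x : ℝ => x ^ (-(2*β))) volume 0 1 :=
          intervalIntegral.intervalIntegrable_rpow' (by linarith)
        have h2 := h1.comp_sub_left 1
        norm_num at h2
        exact (intervalIntegrable_iff_integrableOn_Ioo_of_le zero_le_one).mp h2.symm
      · intro x hx
        have h1x : (0:ℝ) < 1 - x := by linarith [hx.2]
        have h0 : 0 < c * (1 - x)^2 := mul_pos hpk0 (pow_pos h1x 2)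
        have h1 : (Real.log (P x / x)) ^ (-β) ≤ (c * (1 - x)^2) ^ (-β) :=
          Real.rpow_le_rpow_of_nonpos h0 (hu_lb hx) (by linarith)
        have h2 : (c * (1 - x)^2) ^ (-β) = c ^ (-β) * (1-x) ^ (-(2*β)) := by
          rw [Real.mul_rpow hpk0.le (by positivity)]
          congr 1
          rw [← Real.rpow_natCast (1-x) 2, ← Real.rpow_mul h1x.le]
          congr 1
          push_cast
          ring
        rw [h2] at h1
        exact h1
  obtain ⟨M, hMint, hMbd⟩ := hmajor
  have hrpow_nonneg : ∀ {x : ℝ}, x ∈ Ioo (0:ℝ) 1 → 0 ≤ (Real.log (P x / x)) ^ (-β) :=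
    fun hx => Real.rpow_nonneg (hu_pos hx).le _
  have hInthn : IntegrableOn (fun x => (Real.log (P x / x)) ^ (-β)) (Ioo (0:ℝ) 1) := by
    apply Integrable.mono' hMint
    · exact ((hucont.rpow_const (fun x hx => Or.inl (ne_of_gt (hu_pos hx)))).aestronglyMeasurable
        measurableSet_Ioo)
    · filter_upwards [ae_restrict_mem measurableSet_Ioo] with x hx
      rw [Real.norm_eq_abs, abs_of_nonneg (hrpow_nonneg hx)]
      exact hMbd x hx
  have hInth : IntegrableOn (fun x => (((Real.log (P x / x)) : ℂ)) ^ (-α)) (Ioo (0:ℝ) 1) := by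
    apply Integrable.mono' hMint (hhcont.aestronglyMeasurable measurableSet_Ioo)
    filter_upwards [ae_restrict_mem measurableSet_Ioo] with x hx
    rw [hnorm hx]
    exact hMbd x hx
  -- change of variables
  have hdwa : ∀ t ∈ Ioi (0:ℝ), HasDerivWithinAt g (-(Fn t)) (Ioi 0) t :=
    fun t ht => (hgderiv ht).hasDerivWithinAt
  have hCOV : (∫ x in Ioo (0:ℝ) 1, (((Real.log (P x / x)) : ℂ)) ^ (-α))
      = ∫ t in Ioi (0:ℝ), (Fn t : ℂ) * ((t : ℂ)) ^ (-α) := by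
    rw [← himg, integral_image_eq_integral_abs_deriv_smul measurableSet_Ioi hdwa hginj]
    apply setIntegral_congr_fun measurableSet_Ioi
    intro t ht
    simp only [abs_neg]
    rw [abs_of_nonneg (hFnonneg t), hug ht, Complex.real_smul]
  have hIntt : IntegrableOn (fun t => (Fn t : ℂ) * ((t : ℂ)) ^ (-α)) (Ioi (0:ℝ)) := by
    have h1 := (integrableOn_image_iff_integrableOn_abs_deriv_smul measurableSet_Ioi hdwa hginj
      (fun x => (((Real.log (P x / x)) : ℂ)) ^ (-α))).mp (by rw [himg]; exact hInth)
    apply h1.congr_fun _ measurableSet_Ioi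
    intro t ht
    simp only [abs_neg]
    rw [abs_of_nonneg (hFnonneg t), hug ht, Complex.real_smul]
  have hCOVr : (∫ x in Ioo (0:ℝ) 1, (Real.log (P x / x)) ^ (-β))
      = ∫ t in Ioi (0:ℝ), Fn t * (t : ℝ) ^ (-β) := by
    rw [← himg, integral_image_eq_integral_abs_deriv_smul measurableSet_Ioi hdwa hginj]
    apply setIntegral_congr_fun measurableSet_Ioi
    intro t ht
    simp only [abs_neg]
    rw [abs_of_nonneg (hFnonneg t), hug ht, smul_eq_mul]
  have hInttr : IntegrableOn (fun t => Fn t * (t : ℝ) ^ (-β)) (Ioi (0:ℝ)) := by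
    have h1 := (integrableOn_image_iff_integrableOn_abs_deriv_smul measurableSet_Ioi hdwa hginj
      (fun x => (Real.log (P x / x)) ^ (-β))).mp (by rw [himg]; exact hInthn)
    apply h1.congr_fun _ measurableSet_Ioi
    intro t ht
    simp only [abs_neg]
    rw [abs_of_nonneg (hFnonneg t), hug ht, smul_eq_mul]

  -- Gamma facts
  have hβ1 : (0:ℝ) < 1 - β := by linarith
  have hGammaR : 0 < Real.Gamma (1 - β) := Real.Gamma_pos_of_pos hβ1
  -- integrability of individual terms
  have hterm_int : ∀ n : ℕ, 1 ≤ n →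
      IntegrableOn (fun t => Real.exp (-((n:ℝ) * t)) * t ^ (-β)) (Ioi (0:ℝ)) := by
    intro n hn
    have hn0 : (0:ℝ) < n := by exact_mod_cast hn
    have h1 : IntegrableOn (fun x => Real.exp (-((n:ℝ)*x)) * ((n:ℝ)*x) ^ ((1 - β) - 1))
        (Ioi (0:ℝ)) := by
      have h2 := (integrableOn_Ioi_comp_mul_left_iff
        (fun x => Real.exp (-x) * x ^ ((1 - β) - 1)) 0 hn0).mpr
        (by rw [mul_zero]; exact Real.GammaIntegral_convergent hβ1)
      exact h2
    have h2 : IntegrableOn (fun x => (n:ℝ) ^ β * (Real.exp (-((n:ℝ)*x)) * ((n:ℝ)*x) ^ ((1 - β) - 1)))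
        (Ioi (0:ℝ)) := h1.const_mul ((n:ℝ) ^ β)
    apply h2.congr_fun _ measurableSet_Ioi
    intro t ht
    rw [mem_Ioi] at ht
    have hcancel : (n:ℝ) ^ β * (n:ℝ) ^ (-β) = 1 := by
      rw [← Real.rpow_add hn0]; simp
    simp only []
    rw [show (1:ℝ) - β - 1 = -β by ring, Real.mul_rpow hn0.le ht.le]
    linear_combination (Real.exp (-((n:ℝ)*t)) * t ^ (-β)) * hcancel
  -- value of individual terms
  have hterm_val : ∀ n : ℕ, 1 ≤ n →
      (∫ t in Ioi (0:ℝ), Real.exp (-((n:ℝ) * t)) * t ^ (-β))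
        = Real.Gamma (1 - β) * (n:ℝ) ^ (β - 1) := by
    intro n hn
    have hn0 : (0:ℝ) < n := by exact_mod_cast hn
    have hval := Real.integral_rpow_mul_exp_neg_mul_Ioi hβ1 hn0
    rw [show (1:ℝ) - β - 1 = -β by ring] at hval
    have hcomm : (∫ t in Ioi (0:ℝ), Real.exp (-((n:ℝ) * t)) * t ^ (-β))
        = ∫ t in Ioi (0:ℝ), t ^ (-β) * Real.exp (-((n:ℝ) * t)) :=
      setIntegral_congr_fun measurableSet_Ioi (fun t _ => mul_comm _ _)
    rw [hcomm, hval]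
    rw [one_div, Real.inv_rpow hn0.le, ← Real.rpow_neg hn0.le]
    rw [show -(1 - β) = β - 1 by ring]
    ring
  -- per-term integrability including the n q_n factor
  have hSint : ∀ n : ℕ,
      IntegrableOn (fun t => (n:ℝ) * q n * Real.exp (-((n:ℝ)*t)) * t ^ (-β)) (Ioi (0:ℝ)) := by
    intro n
    rcases Nat.eq_zero_or_pos n with h | h
    · subst h
      simp only [Nat.cast_zero, zero_mul]
      have hz : IntegrableOn (fun _ : ℝ => (0:ℝ)) (Ioi (0:ℝ)) := integrableOn_zero
      exact hz.congr_fun (fun t _ => by ring) measurableSet_Ioi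
    · have h2 : IntegrableOn (fun t => ((n:ℝ) * q n) * (Real.exp (-((n:ℝ)*t)) * t ^ (-β)))
          (Ioi (0:ℝ)) := (hterm_int n h).const_mul ((n:ℝ) * q n)
      exact h2.congr_fun (fun t _ => by ring) measurableSet_Ioi
  have hterm_eq : ∀ n : ℕ,
      (∫ t in Ioi (0:ℝ), (n:ℝ) * q n * Real.exp (-((n:ℝ)*t)) * t ^ (-β))
        = q n * (n:ℝ) ^ β * Real.Gamma (1 - β) := by
    intro n
    rcases Nat.eq_zero_or_pos n with h | h
    · subst h
      simp [hq0]
    · have hn0 : (0:ℝ) < n := by exact_mod_cast h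
      have h1 : (fun t => (n:ℝ) * q n * Real.exp (-((n:ℝ)*t)) * t ^ (-β))
          = fun t => ((n:ℝ) * q n) * (Real.exp (-((n:ℝ)*t)) * t ^ (-β)) := by
        funext t; ring
      rw [h1, integral_const_mul, hterm_val n h]
      have hpow : (n:ℝ) * (n:ℝ) ^ (β - 1) = (n:ℝ) ^ β := by
        nth_rewrite 1 [← Real.rpow_one (n:ℝ)]
        rw [← Real.rpow_add hn0]
        norm_num
      linear_combination q n * Real.Gamma (1 - β) * hpow
  -- partial sums are bounded
  have hpartial : ∀ N : ℕ,
      (∑ n ∈ Finset.range N, q n * (n:ℝ) ^ β) * Real.Gamma (1 - β)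
        ≤ ∫ x in Ioo (0:ℝ) 1, (Real.log (P x / x)) ^ (-β) := by
    intro N
    have hsum_int : (∫ t in Ioi (0:ℝ),
        (∑ n ∈ Finset.range N, (n:ℝ) * q n * Real.exp (-((n:ℝ)*t)) * t ^ (-β)))
        = ∑ n ∈ Finset.range N, ∫ t in Ioi (0:ℝ),
            (n:ℝ) * q n * Real.exp (-((n:ℝ)*t)) * t ^ (-β) :=
      integral_finset_sum _ (fun n _ => hSint n)
    have hptwise : ∀ t ∈ Ioi (0:ℝ),
        (∑ n ∈ Finset.range N, (n:ℝ) * q n * Real.exp (-((n:ℝ)*t)) * t ^ (-β))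
          ≤ Fn t * t ^ (-β) := by
      intro t ht
      rw [mem_Ioi] at ht
      have h1 : (∑ n ∈ Finset.range N, (n:ℝ) * q n * Real.exp (-((n:ℝ)*t)) * t ^ (-β))
          = (∑ n ∈ Finset.range N, (n:ℝ) * q n * Real.exp (-((n:ℝ)*t))) * t ^ (-β) := by
        rw [Finset.sum_mul]
      rw [h1]
      apply mul_le_mul_of_nonneg_right _ (Real.rpow_nonneg ht.le _)
      exact Summable.sum_le_tsum (Finset.range N)
        (fun n _ => mul_nonneg (mul_nonneg (Nat.cast_nonneg n) (hqnn n)) (Real.exp_pos _).le)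
        (hFsumm ht)
    calc (∑ n ∈ Finset.range N, q n * (n:ℝ) ^ β) * Real.Gamma (1 - β)
        = ∑ n ∈ Finset.range N, ∫ t in Ioi (0:ℝ),
            (n:ℝ) * q n * Real.exp (-((n:ℝ)*t)) * t ^ (-β) := by
          rw [Finset.sum_mul]
          exact Finset.sum_congr rfl (fun n _ => (hterm_eq n).symm)
      _ = ∫ t in Ioi (0:ℝ),
            (∑ n ∈ Finset.range N, (n:ℝ) * q n * Real.exp (-((n:ℝ)*t)) * t ^ (-β)) :=
          hsum_int.symm
      _ ≤ ∫ t in Ioi (0:ℝ), Fn t * t ^ (-β) := by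
          exact setIntegral_mono_on
            (integrable_finset_sum _ (fun n _ => hSint n)) hInttr measurableSet_Ioi hptwise
      _ = ∫ x in Ioo (0:ℝ) 1, (Real.log (P x / x)) ^ (-β) := hCOVr.symm
  have hfsummable : Summable (fun n : ℕ => q n * (n:ℝ) ^ β) := by
    apply summable_of_sum_range_le
      (c := (∫ x in Ioo (0:ℝ) 1, (Real.log (P x / x)) ^ (-β)) / Real.Gamma (1 - β))
    · intro n
      exact mul_nonneg (hqnn n) (Real.rpow_nonneg (Nat.cast_nonneg n) β)
    · intro N
      rw [le_div_iff₀ hGammaR]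
      exact hpartial N
  have hconj1 : Summable (fun n : ℕ => ‖(n : ℂ) ^ α * (q n : ℂ)‖) := by
    apply Summable.congr hfsummable
    intro n
    rcases Nat.eq_zero_or_pos n with h | h
    · subst h
      simp [hq0]
    · have hn0 : (0:ℝ) < n := by exact_mod_cast h
      rw [norm_mul, show ((n:ℂ)) = (((n:ℝ)):ℂ) by push_cast ; rfl,
        Complex.norm_cpow_eq_rpow_re_of_pos hn0,
        Complex.norm_real, Real.norm_eq_abs, abs_of_nonneg (hqnn n)]
      rw [← hβdef]
      ring

  -- the Mellin-transform / Dirichlet series identity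
  have hsre : (0:ℝ) < (1 - α).re := by
    rw [Complex.sub_re, Complex.one_re, ← hβdef]
    linarith
  have hmellin : HasSum
      (fun n : ℕ => Complex.Gamma (1 - α) * (((n:ℝ) * q n : ℝ) : ℂ) / (((n:ℝ)) : ℂ) ^ (1 - α))
      (mellin (fun t => ((Fn t : ℝ) : ℂ)) (1 - α)) := by
    apply hasSum_mellin
    · intro n
      rcases Nat.eq_zero_or_pos n with h | h
      · subst h; left; simp
      · right; exact_mod_cast h
    · exact hsre
    · intro t ht
      rw [mem_Ioi] at ht
      have h1 : HasSum (fun n : ℕ => (n:ℝ) * q n * Real.exp (-((n:ℝ) * t))) (Fn t) :=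
        (hFsumm ht).hasSum
      have h2 := Complex.ofRealCLM.hasSum h1
      have h3 : (fun n : ℕ => Complex.ofRealCLM ((n:ℝ) * q n * Real.exp (-((n:ℝ) * t))))
          = fun n : ℕ => (((n:ℝ) * q n : ℝ) : ℂ) * ((Real.exp (-(n:ℝ) * t) : ℝ) : ℂ) := by
        funext n
        rw [neg_mul]
        simp only [Complex.ofRealCLM_apply]
        push_cast
        ring
      rw [h3] at h2
      exact h2
    · -- summability of norms
      apply Summable.congr hfsummable
      intro n
      rcases Nat.eq_zero_or_pos n with h | h
      · subst h
        simp [hq0]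
      · have hn0 : (0:ℝ) < n := by exact_mod_cast h
        have hpow : (n:ℝ) ^ ((1:ℝ) - β) * (n:ℝ) ^ β = (n:ℝ) := by
          rw [← Real.rpow_add hn0]; norm_num
        rw [show (1 - α).re = 1 - β by rw [Complex.sub_re, Complex.one_re, ← hβdef]]
        rw [Complex.norm_real, Real.norm_eq_abs,
          abs_of_nonneg (mul_nonneg (Nat.cast_nonneg n) (hqnn n))]
        rw [eq_div_iff (ne_of_gt (Real.rpow_pos_of_pos hn0 _))]
        linear_combination q n * hpow
  have hmellin_eq : mellin (fun t => ((Fn t : ℝ) : ℂ)) (1 - α)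
      = ∫ t in Ioi (0:ℝ), (Fn t : ℂ) * ((t : ℂ)) ^ (-α) := by
    rw [mellin]
    apply setIntegral_congr_fun measurableSet_Ioi
    intro t ht
    simp only [smul_eq_mul]
    rw [show (1 - α - 1 : ℂ) = -α by ring, mul_comm]
  -- nonvanishing of Gamma
  have hGammaC : Complex.Gamma (1 - α) ≠ 0 := by
    apply Complex.Gamma_ne_zero
    intro mm hmm
    have hre : (1 - α).re = (-(mm:ℂ)).re := by rw [hmm]
    rw [Complex.sub_re, Complex.one_re, Complex.neg_re, Complex.natCast_re, ← hβdef] at hre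
    have hmge : (0:ℝ) ≤ mm := Nat.cast_nonneg mm
    linarith
  -- rewrite the summands
  have hterm2 : (fun n : ℕ => Complex.Gamma (1 - α) * (((n:ℝ) * q n : ℝ) : ℂ) / (((n:ℝ)) : ℂ) ^ (1 - α))
      = fun n : ℕ => Complex.Gamma (1 - α) * ((n : ℂ) ^ α * (q n : ℂ)) := by
    funext n
    rcases Nat.eq_zero_or_pos n with h | h
    · subst h
      simp [hq0]
    · have hn0 : ((n:ℂ)) ≠ 0 := Nat.cast_ne_zero.mpr (by omega)
      have hpow : ((n:ℂ)) ^ (1 - α) * ((n:ℂ)) ^ α = ((n:ℂ)) := by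
        rw [← Complex.cpow_add _ _ hn0]
        simp
      have hpne : ((n:ℂ)) ^ (1 - α) ≠ 0 := by
        intro hz
        rw [Complex.cpow_eq_zero_iff] at hz
        exact hn0 hz.1
      push_cast
      rw [div_eq_iff hpne]
      linear_combination (-(Complex.Gamma (1 - α)) * (q n : ℂ)) * hpow
  rw [hterm2] at hmellin
  have hfinal : HasSum (fun n : ℕ => (n : ℂ) ^ α * (q n : ℂ))
      ((Complex.Gamma (1 - α))⁻¹ * mellin (fun t => ((Fn t : ℝ) : ℂ)) (1 - α)) := by
    have h1 := hmellin.mul_left (Complex.Gamma (1 - α))⁻¹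
    have h2 : (fun n : ℕ => (Complex.Gamma (1 - α))⁻¹ *
          (Complex.Gamma (1 - α) * ((n : ℂ) ^ α * (q n : ℂ))))
        = fun n : ℕ => (n : ℂ) ^ α * (q n : ℂ) := by
      funext n
      rw [← mul_assoc, inv_mul_cancel₀ hGammaC, one_mul]
    rwa [h2] at h1
  refine ⟨hconj1, ?_⟩
  have hIoo : (∫ η in (0:ℝ)..1, ((Real.log ((∑' k, p k * η ^ k) / η) : ℂ)) ^ (-α))
      = ∫ x in Ioo (0:ℝ) 1, (((Real.log (P x / x)) : ℂ)) ^ (-α) := by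
    rw [intervalIntegral.integral_of_le zero_le_one, integral_Ioc_eq_integral_Ioo]
  rw [hfinal.tsum_eq, hIoo, hCOV, hmellin_eq]
end

section
/- Let (p_k^{(1)}) and (p_k^{(2)}) be critical offspring distributions with variances σ_1², σ_2² ∈ (0,∞), pgfs Φ_1, Φ_2, tree-size probabilities (q_n^{(1)}), (q_n^{(2)}), and suppose Φ_1(t) ≤ Φ_2(t) for all t ∈ (0,1). Then: (i) for every real α < 0, ∑_{n≥1} n^α q_n^{(1)} ≤ ∑_{n≥1} n^α q_n^{(2)}; (ii) for every real α with 0 < α < 1/2, ∑_{n≥1} n^α q_n^{(1)} ≥ ∑_{n≥1} n^α q_n^{(2)}; (iii) ∑_{n≥1} q_n^{(1)} log n ≥ ∑_{n≥1} q_n^{(2)} log n. -/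
open MeasureTheory Set Filter
open scoped ENNReal Topology

lemma summable_of_tsum_one {f : ℕ → ℝ} (h : ∑' n, f n = 1) : Summable f := by
  by_contra hs
  rw [tsum_eq_zero_of_not_summable hs] at h
  norm_num at h

lemma summable_pow_aux {q : ℕ → ℝ} (hq : Summable q) (hqnn : ∀ n, 0 ≤ q n) {z : ℝ}
    (hz0 : 0 ≤ z) (hz1 : z ≤ 1) : Summable (fun n => q n * z ^ n) := by
  refine Summable.of_nonneg_of_le (fun n => mul_nonneg (hqnn n) (pow_nonneg hz0 n)) (fun n => ?_) hq
  calc q n * z ^ n ≤ q n * 1 := by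
        exact mul_le_mul_of_nonneg_left (pow_le_one₀ hz0 hz1) (hqnn n)
    _ = q n := mul_one _

lemma pgf_convexOn {p : ℕ → ℝ} (hp : ∀ k, 0 ≤ p k) (hsum : Summable p) :
    ConvexOn ℝ (Icc (0:ℝ) 1) (fun t => ∑' k, p k * t ^ k) := by
  refine ⟨convex_Icc _ _, fun x hx y hy a b ha hb hab => ?_⟩
  have hx' := hx.1; have hx1 := hx.2; have hy' := hy.1; have hy1 := hy.2
  have hmem : a • x + b • y ∈ Icc (0:ℝ) 1 := (convex_Icc (0:ℝ) 1) hx hy ha hb hab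
  have hsx : Summable (fun k => p k * x ^ k) := summable_pow_aux hsum hp hx' hx1
  have hsy : Summable (fun k => p k * y ^ k) := summable_pow_aux hsum hp hy' hy1
  have hterm : ∀ k : ℕ, p k * (a • x + b • y) ^ k ≤ a • (p k * x ^ k) + b • (p k * y ^ k) := by
    intro k
    have hc := (convexOn_pow k).2 (mem_Ici.mpr hx') (mem_Ici.mpr hy') ha hb hab
    have h2 := mul_le_mul_of_nonneg_left hc (hp k)
    simp only [smul_eq_mul] at h2 ⊢
    nlinarith [hp k, h2]
  simp only [smul_eq_mul] at hterm ⊢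
  calc (∑' k, p k * (a * x + b * y) ^ k)
      ≤ ∑' k, (a * (p k * x ^ k) + b * (p k * y ^ k)) := by
        refine Summable.tsum_le_tsum hterm ?_ ?_
        · exact summable_pow_aux hsum hp hmem.1 hmem.2
        · exact ((hsx.mul_left a).add (hsy.mul_left b))
    _ = a * (∑' k, p k * x ^ k) + b * (∑' k, p k * y ^ k) := by
        rw [Summable.tsum_add (hsx.mul_left a) (hsy.mul_left b), tsum_mul_left, tsum_mul_left]

lemma fixedpoint_le {p : ℕ → ℝ} (hp : ∀ k, 0 ≤ p k) (hps : ∑' k, p k = 1)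
    {z a b : ℝ} (hz : z ∈ Ioo (0:ℝ) 1)
    (ha0 : 0 ≤ a) (haz : a ≤ z) (hb0 : 0 ≤ b) (hbz : b ≤ z)
    (hb : b = z * ∑' k, p k * b ^ k)
    (ha : a ≤ z * ∑' k, p k * a ^ k) : a ≤ b := by
  by_contra hab
  push_neg at hab
  have hsum : Summable p := summable_of_tsum_one hps
  have ha1 : a < 1 := lt_of_le_of_lt haz hz.2
  have hb1 : b < 1 := lt_of_le_of_lt hbz hz.2
  have hden : 0 < 1 - b := by linarith
  set lam : ℝ := (1 - a) / (1 - b) with hlam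
  set mu : ℝ := (a - b) / (1 - b) with hmu
  have hlam0 : 0 ≤ lam := div_nonneg (by linarith) hden.le
  have hmu0 : 0 < mu := div_pos (by linarith) hden
  have hlm : lam + mu = 1 := by rw [hlam, hmu]; field_simp; ring
  have hcomb : lam • b + mu • (1:ℝ) = a := by
    show lam * b + mu * 1 = a
    rw [hlam, hmu]
    field_simp
    ring
  have hconv := (pgf_convexOn hp hsum).2 (mem_Icc.mpr ⟨hb0, hb1.le⟩)
    (mem_Icc.mpr ⟨zero_le_one, le_refl 1⟩) hlam0 hmu0.le hlm
  rw [hcomb] at hconv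
  have hΦ1 : (∑' k, p k * (1:ℝ) ^ k) = 1 := by simpa using hps
  simp only [smul_eq_mul] at hconv
  rw [hΦ1, mul_one] at hconv
  -- a ≤ z * Φ(a) ≤ z * (lam * Φ(b) + mu) = lam * (z * Φ b) + mu * z = lam * b + mu * z
  have h2 : a ≤ lam * (z * ∑' k, p k * b ^ k) + mu * z := by
    calc a ≤ z * ∑' k, p k * a ^ k := ha
      _ ≤ z * (lam * (∑' k, p k * b ^ k) + mu) := by
          exact mul_le_mul_of_nonneg_left hconv (le_of_lt hz.1)
      _ = lam * (z * ∑' k, p k * b ^ k) + mu * z := by ring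
  rw [← hb] at h2
  -- but lam * b + mu * z < lam * b + mu * 1 = a
  have : lam * b + mu * z < a := by
    have : mu * z < mu * 1 := by
      exact mul_lt_mul_of_pos_left hz.2 hmu0
    have hc : lam * b + mu * 1 = a := by
      simpa [smul_eq_mul] using hcomb
    linarith
  linarith

lemma bernoulli_pow {s : ℝ} (hs : -1 ≤ s - 1) (k : ℕ) : 1 + (k:ℝ) * (s - 1) ≤ s ^ k := by
  have := one_add_mul_le_pow (by linarith : (-2:ℝ) ≤ s - 1) k
  simpa using this

lemma g_lower {s : ℝ} (hs0 : 0 ≤ s) (hs1 : s ≤ 1) {k : ℕ} (hk : 2 ≤ k) :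
    (1 - s) ^ 2 ≤ s ^ k - 1 - (k:ℝ) * (s - 1) := by
  obtain ⟨m, rfl⟩ : ∃ m, k = m + 2 := ⟨k - 2, by omega⟩
  have hber : 1 + (m:ℝ) * (s - 1) ≤ s ^ m := bernoulli_pow (by linarith) m
  have hpow : s ^ (m + 2) = s ^ m * s ^ 2 := by ring
  have hs2 : (0:ℝ) ≤ s ^ 2 := sq_nonneg s
  have h1 : (1 + (m:ℝ) * (s - 1)) * s ^ 2 ≤ s ^ m * s ^ 2 :=
    mul_le_mul_of_nonneg_right hber hs2
  have hcast : ((m + 2 : ℕ) : ℝ) = (m:ℝ) + 2 := by push_cast; ring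
  rw [hpow, hcast]
  nlinarith [sq_nonneg (1 - s), mul_nonneg (mul_nonneg (Nat.cast_nonneg' m : (0:ℝ) ≤ m) (by linarith : 0 ≤ 1 - s)) (sq_nonneg (1-s))]

lemma pgf_lower {p : ℕ → ℝ} (hp : ∀ k, 0 ≤ p k) (hps : ∑' k, p k = 1)
    (hcrit : ∑' k : ℕ, (k:ℝ) * p k = 1) {k₀ : ℕ} (hk₀ : 2 ≤ k₀) (hpk : 0 < p k₀)
    {s : ℝ} (hs0 : 0 ≤ s) (hs1 : s ≤ 1) :
    s + p k₀ * (1 - s) ^ 2 ≤ ∑' k, p k * s ^ k := by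
  have hsum : Summable p := summable_of_tsum_one hps
  have hsumk : Summable (fun k : ℕ => (k:ℝ) * p k) := summable_of_tsum_one hcrit
  have hA : Summable (fun k => p k * s ^ k) := summable_pow_aux hsum hp hs0 hs1
  have hB : Summable (fun k : ℕ => p k + ((k:ℝ) * p k) * (s - 1)) :=
    hsum.add (hsumk.mul_right _)
  have hAB : Summable (fun k : ℕ => p k * s ^ k - (p k + ((k:ℝ) * p k) * (s - 1))) :=
    hA.sub hB
  have hterm : ∀ k : ℕ, 0 ≤ p k * s ^ k - (p k + ((k:ℝ) * p k) * (s - 1)) := by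
    intro k
    have h1 : 1 + (k:ℝ) * (s - 1) ≤ s ^ k := bernoulli_pow (by linarith) k
    have := mul_le_mul_of_nonneg_left h1 (hp k)
    nlinarith
  have hsingle : p k₀ * s ^ k₀ - (p k₀ + ((k₀:ℝ) * p k₀) * (s - 1))
      ≤ ∑' k, (p k * s ^ k - (p k + ((k:ℝ) * p k) * (s - 1))) :=
    Summable.le_tsum hAB k₀ (fun i _ => hterm i)
  have htsumB : ∑' k : ℕ, (p k + ((k:ℝ) * p k) * (s - 1)) = 1 + (s - 1) := by
    rw [Summable.tsum_add hsum (hsumk.mul_right _), tsum_mul_right, hps, hcrit, one_mul]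
  have htsumAB : ∑' k, (p k * s ^ k - (p k + ((k:ℝ) * p k) * (s - 1)))
      = (∑' k, p k * s ^ k) - (1 + (s - 1)) := by
    rw [Summable.tsum_sub hA hB, htsumB]
  rw [htsumAB] at hsingle
  have hg : (1 - s) ^ 2 ≤ s ^ k₀ - 1 - (k₀:ℝ) * (s - 1) := g_lower hs0 hs1 hk₀
  have hmul := mul_le_mul_of_nonneg_left hg (hp k₀)
  nlinarith [hmul, hsingle]

lemma sqrt_bound {c z a : ℝ} (hc : 0 < c) (hz2 : 1/2 ≤ z) (hz1 : z < 1)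
    (ha0 : 0 ≤ a) (ha1 : a ≤ 1)
    (hfix : z * (a + c * (1 - a) ^ 2) ≤ a) :
    1 - a ≤ Real.sqrt (2 / c) * Real.sqrt (1 - z) := by
  have hkey : (1 - a) ^ 2 ≤ (2 / c) * (1 - z) := by
    rw [div_mul_eq_mul_div, le_div_iff₀ hc]
    nlinarith [sq_nonneg (1 - a)]
  calc 1 - a = Real.sqrt ((1 - a) ^ 2) := by
        rw [Real.sqrt_sq (by linarith)]
    _ ≤ Real.sqrt ((2 / c) * (1 - z)) := Real.sqrt_le_sqrt hkey
    _ = Real.sqrt (2 / c) * Real.sqrt (1 - z) := Real.sqrt_mul (by positivity) _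

lemma lintegral_Ioi_comp_mul_left (f : ℝ → ℝ≥0∞) {c : ℝ} (hc : 0 < c) :
    ∫⁻ t in Ioi (0:ℝ), f (c * t) = ENNReal.ofReal c⁻¹ * ∫⁻ t in Ioi (0:ℝ), f t := by
  have hpre : (c * ·) ⁻¹' (Ioi (0:ℝ)) = Ioi 0 := by
    ext x
    simp only [mem_preimage, mem_Ioi]
    constructor
    · intro h; nlinarith
    · intro h; exact mul_pos hc h
  have hmap : Measure.map (c * ·) (volume.restrict (Ioi (0:ℝ)))
      = ENNReal.ofReal c⁻¹ • (volume.restrict (Ioi (0:ℝ))) := by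
    conv_lhs => rw [← hpre]
    rw [← Measure.restrict_map (measurable_const_mul c) measurableSet_Ioi,
      Real.map_volume_mul_left hc.ne', Measure.restrict_smul,
      abs_of_pos (inv_pos.mpr hc)]
  set e : ℝ ≃ᵐ ℝ := (Homeomorph.mulLeft₀ c hc.ne').toMeasurableEquiv with he
  have hcoe : ⇑e = (c * ·) := rfl
  have h1 : ∫⁻ t, f t ∂(Measure.map (⇑e) (volume.restrict (Ioi (0:ℝ))))
      = ∫⁻ t in Ioi (0:ℝ), f (c * t) := by
    rw [lintegral_map_equiv f e, hcoe]
  rw [← h1, hcoe, hmap, lintegral_smul_measure, smul_eq_mul]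

lemma interchange (q : ℕ → ℝ) (hq : ∀ n, 0 ≤ q n) (g : ℕ → ℝ → ℝ)
    (hg : ∀ n, Measurable (g n)) :
    ∑' n, ENNReal.ofReal (q n) * ∫⁻ t in Ioi (0:ℝ), ENNReal.ofReal (g n t)
      = ∫⁻ t in Ioi (0:ℝ), ∑' n, ENNReal.ofReal (q n * g n t) := by
  have h1 : ∀ n, ENNReal.ofReal (q n) * ∫⁻ t in Ioi (0:ℝ), ENNReal.ofReal (g n t)
      = ∫⁻ t in Ioi (0:ℝ), ENNReal.ofReal (q n * g n t) := by
    intro n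
    rw [← lintegral_const_mul' _ _ ENNReal.ofReal_ne_top]
    congr 1
    funext t
    rw [ENNReal.ofReal_mul (hq n)]
  simp_rw [h1]
  exact (lintegral_tsum (fun n => ((hg n).const_mul (q n)).ennreal_ofReal.aemeasurable)).symm

lemma lint_scale (g : ℝ → ℝ) {β c : ℝ} (hc : 0 < c) :
    ∫⁻ t in Ioi (0:ℝ), ENNReal.ofReal (t ^ β * g (c * t))
      = ENNReal.ofReal (c ^ (-β) * c⁻¹) * ∫⁻ x in Ioi (0:ℝ), ENNReal.ofReal (x ^ β * g x) := by
  have hstep : ∀ t ∈ Ioi (0:ℝ), ENNReal.ofReal (t ^ β * g (c * t))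
      = ENNReal.ofReal (c ^ (-β)) * ENNReal.ofReal ((c * t) ^ β * g (c * t)) := by
    intro t ht
    rw [← ENNReal.ofReal_mul (by positivity)]
    congr 1
    rw [Real.mul_rpow hc.le (le_of_lt ht), ← mul_assoc, ← mul_assoc,
      ← Real.rpow_add hc, neg_add_cancel, Real.rpow_zero, one_mul]
  rw [setLIntegral_congr_fun measurableSet_Ioi hstep,
    lintegral_const_mul' _ _ ENNReal.ofReal_ne_top,
    lintegral_Ioi_comp_mul_left (fun x => ENNReal.ofReal (x ^ β * g x)) hc,
    ← mul_assoc, ← ENNReal.ofReal_mul (by positivity)]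

lemma lint_gamma {α : ℝ} (hα : α < 0) :
    ∫⁻ x in Ioi (0:ℝ), ENNReal.ofReal (x ^ (-α - 1) * Real.exp (-x))
      = ENNReal.ofReal (Real.Gamma (-α)) := by
  have hint : IntegrableOn (fun x : ℝ => Real.exp (-x) * x ^ (-α - 1)) (Ioi 0) :=
    Real.GammaIntegral_convergent (by linarith)
  rw [← ofReal_integral_eq_lintegral_ofReal]
  · rw [Real.Gamma_eq_integral (by linarith : 0 < -α)]
    congr 1
    apply setIntegral_congr_fun measurableSet_Ioi
    intro t ht
    ring
  · apply hint.congr_fun (fun t ht => by ring) measurableSet_Ioi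
  · filter_upwards [ae_restrict_mem measurableSet_Ioi] with t ht
    have : (0:ℝ) < t := ht
    positivity

lemma rpow_const_arith {c α : ℝ} (hc : 0 < c) : c ^ (-(-α - 1)) * c⁻¹ = c ^ α := by
  have h1 : -(-α - 1) = α + 1 := by ring
  rw [h1, Real.rpow_add hc, Real.rpow_one, mul_assoc, mul_inv_cancel₀ hc.ne', mul_one]

lemma lint_kernel_exp {α : ℝ} (hα : α < 0) {n : ℕ} (hn : 1 ≤ n) :
    ∫⁻ t in Ioi (0:ℝ), ENNReal.ofReal (t ^ (-α - 1) * Real.exp (-((n:ℝ) * t)))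
      = ENNReal.ofReal ((n:ℝ) ^ α * Real.Gamma (-α)) := by
  have hc : (0:ℝ) < (n:ℝ) := by exact_mod_cast hn
  have := lint_scale (fun x => Real.exp (-x)) (β := -α - 1) hc
  rw [this, rpow_const_arith hc, lint_gamma hα,
    ← ENNReal.ofReal_mul (by positivity)]

lemma lint_kernel_one_sub {α : ℝ} {n : ℕ} (hn : 1 ≤ n) :
    ∫⁻ t in Ioi (0:ℝ), ENNReal.ofReal (t ^ (-α - 1) * (1 - Real.exp (-((n:ℝ) * t))))
      = ENNReal.ofReal ((n:ℝ) ^ α) *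
        ∫⁻ x in Ioi (0:ℝ), ENNReal.ofReal (x ^ (-α - 1) * (1 - Real.exp (-x))) := by
  have hc : (0:ℝ) < (n:ℝ) := by exact_mod_cast hn
  have := lint_scale (fun x => 1 - Real.exp (-x)) (β := -α - 1) hc
  rw [this, rpow_const_arith hc]

-- finiteness of ∫⁻_{Ioi 0} t^(-α-1) f t for 0 < α < 1/2, f ≤ min(K √t, 1)
lemma measurable_rpow_c (e : ℝ) : Measurable fun t : ℝ => t ^ e := by measurability

lemma lint_fin {α K : ℝ} (hα0 : 0 < α) (hα : α < 1/2) (hK : 0 ≤ K) (f : ℝ → ℝ)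
    (hf01 : ∀ t, 0 < t → t ≤ 1 → f t ≤ K * Real.sqrt t)
    (hfb : ∀ t, 0 < t → f t ≤ 1) :
    ∫⁻ t in Ioi (0:ℝ), ENNReal.ofReal (t ^ (-α - 1) * f t) < ⊤ := by
  rw [← Ioc_union_Ioi_eq_Ioi (zero_le_one (α := ℝ)),
    lintegral_union measurableSet_Ioi Ioc_disjoint_Ioi_same]
  refine ENNReal.add_lt_top.mpr ⟨?_, ?_⟩
  · -- near 0 : bound by K * t ^ (-α - 1 + 1/2)
    have hmono : ∫⁻ t in Ioc (0:ℝ) 1, ENNReal.ofReal (t ^ (-α - 1) * f t)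
        ≤ ∫⁻ t in Ioc (0:ℝ) 1, ENNReal.ofReal (K * t ^ (-α - 1 + 1/2)) := by
      refine setLIntegral_mono (((measurable_rpow_c _).const_mul K).ennreal_ofReal) ?_
      intro t ht
      refine ENNReal.ofReal_le_ofReal ?_
      have ht0 : (0:ℝ) < t := ht.1
      have h1 : t ^ (-α - 1) * f t ≤ t ^ (-α - 1) * (K * Real.sqrt t) :=
        mul_le_mul_of_nonneg_left (hf01 t ht.1 ht.2) (Real.rpow_nonneg ht0.le _)
      rw [Real.rpow_add ht0]
      calc t ^ (-α - 1) * f t ≤ t ^ (-α - 1) * (K * Real.sqrt t) := h1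
        _ = K * (t ^ (-α - 1) * t ^ (1/2 : ℝ)) := by
            rw [Real.sqrt_eq_rpow]; ring
    refine lt_of_le_of_lt hmono ?_
    have hint : IntegrableOn (fun t : ℝ => K * t ^ (-α - 1 + 1/2)) (Ioc 0 1) := by
      have h1 : IntervalIntegrable (fun t : ℝ => t ^ (-α - 1 + 1/2)) volume 0 1 :=
        intervalIntegral.intervalIntegrable_rpow' (by linarith)
      rw [intervalIntegrable_iff_integrableOn_Ioc_of_le zero_le_one] at h1
      exact h1.const_mul K
    exact hint.lintegral_lt_top
  · -- tail : bound by t ^ (-α - 1)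
    have hmono : ∫⁻ t in Ioi (1:ℝ), ENNReal.ofReal (t ^ (-α - 1) * f t)
        ≤ ∫⁻ t in Ioi (1:ℝ), ENNReal.ofReal (t ^ (-α - 1)) := by
      refine setLIntegral_mono ((measurable_rpow_c _).ennreal_ofReal) ?_
      intro t ht
      refine ENNReal.ofReal_le_ofReal ?_
      have ht0 : (0:ℝ) < t := lt_trans one_pos ht
      nlinarith [hfb t ht0, Real.rpow_nonneg ht0.le (-α - 1), Real.rpow_pos_of_pos ht0 (-α-1)]
    refine lt_of_le_of_lt hmono ?_
    exact (integrableOn_Ioi_rpow_of_lt (by linarith) one_pos).lintegral_lt_top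

lemma Gc_pos {α : ℝ} (hα : 0 < α) :
    0 < ∫⁻ x in Ioi (0:ℝ), ENNReal.ofReal (x ^ (-α - 1) * (1 - Real.exp (-x))) := by
  set ε : ℝ := 2 ^ (-α - 1) * (1 - Real.exp (-1)) with hε
  have hεpos : 0 < ε := by
    apply mul_pos (Real.rpow_pos_of_pos two_pos _)
    have : Real.exp (-1) < 1 := Real.exp_lt_one_iff.mpr (by norm_num)
    linarith
  have h1 : ∫⁻ x in Ioc (1:ℝ) 2, ENNReal.ofReal ε
      ≤ ∫⁻ x in Ioc (1:ℝ) 2, ENNReal.ofReal (x ^ (-α - 1) * (1 - Real.exp (-x))) := by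
    refine setLIntegral_mono' measurableSet_Ioc ?_
    intro x hx
    refine ENNReal.ofReal_le_ofReal ?_
    have hx1 : (1:ℝ) ≤ x := hx.1.le
    have hx0 : (0:ℝ) < x := lt_of_lt_of_le one_pos hx1
    have hbase : x ^ (-α - 1) ≥ 2 ^ (-α - 1) := by
      have hp : x ^ (α + 1) ≤ 2 ^ (α + 1) := Real.rpow_le_rpow hx0.le hx.2 (by linarith)
      have e1 : x ^ (-α - 1) = (x ^ (α + 1))⁻¹ := by
        rw [← Real.rpow_neg hx0.le]; ring_nf
      have e2 : (2:ℝ) ^ (-α - 1) = ((2:ℝ) ^ (α + 1))⁻¹ := by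
        rw [← Real.rpow_neg (by norm_num)]; ring_nf
      rw [e1, e2]
      exact inv_anti₀ (Real.rpow_pos_of_pos hx0 _) hp
    have hexp : 1 - Real.exp (-x) ≥ 1 - Real.exp (-1) := by
      have : Real.exp (-x) ≤ Real.exp (-1) := Real.exp_le_exp.mpr (by linarith)
      linarith
    have h2 : (0:ℝ) ≤ 1 - Real.exp (-1) := by
      have : Real.exp (-1) < 1 := Real.exp_lt_one_iff.mpr (by norm_num)
      linarith
    calc ε = 2 ^ (-α - 1) * (1 - Real.exp (-1)) := hε
      _ ≤ x ^ (-α - 1) * (1 - Real.exp (-x)) := by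
          apply mul_le_mul hbase hexp h2 (Real.rpow_nonneg hx0.le _)
  have h0 : (0:ℝ≥0∞) < ∫⁻ x in Ioc (1:ℝ) 2, ENNReal.ofReal ε := by
    rw [setLIntegral_const]
    rw [Real.volume_Ioc]
    simp only [show (2:ℝ) - 1 = 1 by norm_num, ENNReal.ofReal_one, mul_one]
    exact ENNReal.ofReal_pos.mpr hεpos
  calc (0:ℝ≥0∞) < ∫⁻ x in Ioc (1:ℝ) 2, ENNReal.ofReal ε := h0
    _ ≤ ∫⁻ x in Ioc (1:ℝ) 2, ENNReal.ofReal (x ^ (-α - 1) * (1 - Real.exp (-x))) := h1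
    _ ≤ ∫⁻ x in Ioi (0:ℝ), ENNReal.ofReal (x ^ (-α - 1) * (1 - Real.exp (-x))) := by
        apply lintegral_mono_set
        intro x hx
        exact lt_trans one_pos hx.1

lemma tsum_ofReal_mul {q g : ℕ → ℝ} (hqnn : ∀ n, 0 ≤ q n) {c : ℝ} (hc : 0 ≤ c)
    (hgnn : ∀ n, 0 ≤ g n) (hs : Summable (fun n => q n * g n)) :
    ∑' n, ENNReal.ofReal (q n * (c * g n)) = ENNReal.ofReal (c * ∑' n, q n * g n) := by
  rw [ENNReal.ofReal_mul hc,
    ENNReal.ofReal_tsum_of_nonneg (fun n => mul_nonneg (hqnn n) (hgnn n)) hs,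
    ← ENNReal.tsum_mul_left]
  refine tsum_congr fun n => ?_
  rw [← ENNReal.ofReal_mul hc, mul_left_comm]

lemma exp_kernel_eq (t : ℝ) (n : ℕ) : Real.exp (-((n:ℝ) * t)) = Real.exp (-t) ^ n := by
  rw [← Real.exp_nat_mul]
  ring_nf

lemma chain_exp {α : ℝ} (hα : α < 0) (q : ℕ → ℝ) (hqnn : ∀ n, 0 ≤ q n) (hq0 : q 0 = 0)
    (hqsum : ∑' n, q n = 1) :
    (∑' n : ℕ, ENNReal.ofReal ((n:ℝ) ^ α * q n)) * ENNReal.ofReal (Real.Gamma (-α))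
      = ∫⁻ t in Ioi (0:ℝ),
          ENNReal.ofReal (t ^ (-α - 1) * ∑' n, q n * Real.exp (-t) ^ n) := by
  have hqs : Summable q := summable_of_tsum_one hqsum
  calc (∑' n : ℕ, ENNReal.ofReal ((n:ℝ) ^ α * q n)) * ENNReal.ofReal (Real.Gamma (-α))
      = ∑' n : ℕ, ENNReal.ofReal ((n:ℝ) ^ α * q n) * ENNReal.ofReal (Real.Gamma (-α)) :=
        ENNReal.tsum_mul_right.symm
    _ = ∑' n, ENNReal.ofReal (q n) *
          ∫⁻ t in Ioi (0:ℝ), ENNReal.ofReal (t ^ (-α - 1) * Real.exp (-((n:ℝ) * t))) := by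
        refine tsum_congr fun n => ?_
        rcases Nat.eq_zero_or_pos n with hn | hn
        · subst hn; simp [hq0]
        · rw [lint_kernel_exp hα hn,
            ← ENNReal.ofReal_mul (mul_nonneg (Real.rpow_nonneg (Nat.cast_nonneg n) α) (hqnn n)),
            ← ENNReal.ofReal_mul (hqnn n)]
          congr 1
          ring
    _ = ∫⁻ t in Ioi (0:ℝ),
          ∑' n, ENNReal.ofReal (q n * (t ^ (-α - 1) * Real.exp (-((n:ℝ) * t)))) := by
        refine interchange q hqnn _ fun n => ?_
        exact (measurable_rpow_c _).mul
          ((continuous_const.mul continuous_id).neg.rexp.measurable)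
    _ = ∫⁻ t in Ioi (0:ℝ),
          ENNReal.ofReal (t ^ (-α - 1) * ∑' n, q n * Real.exp (-t) ^ n) := by
        refine setLIntegral_congr_fun measurableSet_Ioi ?_
        intro t ht
        have ht0 : (0:ℝ) < t := ht
        have hz1 : Real.exp (-t) ≤ 1 := Real.exp_le_one_iff.mpr (by linarith)
        have hz0 : (0:ℝ) ≤ Real.exp (-t) := (Real.exp_pos _).le
        have hsum2 : Summable (fun n => q n * Real.exp (-t) ^ n) :=
          summable_pow_aux hqs hqnn hz0 hz1
        simp_rw [exp_kernel_eq t]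
        exact tsum_ofReal_mul hqnn (Real.rpow_nonneg ht0.le _)
          (fun n => pow_nonneg hz0 n) hsum2

lemma chain_one_sub {α : ℝ} (hα : 0 < α) (q : ℕ → ℝ) (hqnn : ∀ n, 0 ≤ q n) (hq0 : q 0 = 0)
    (hqsum : ∑' n, q n = 1) :
    (∑' n : ℕ, ENNReal.ofReal ((n:ℝ) ^ α * q n)) *
        (∫⁻ x in Ioi (0:ℝ), ENNReal.ofReal (x ^ (-α - 1) * (1 - Real.exp (-x))))
      = ∫⁻ t in Ioi (0:ℝ),
          ENNReal.ofReal (t ^ (-α - 1) * (1 - ∑' n, q n * Real.exp (-t) ^ n)) := by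
  have hqs : Summable q := summable_of_tsum_one hqsum
  calc (∑' n : ℕ, ENNReal.ofReal ((n:ℝ) ^ α * q n)) *
        (∫⁻ x in Ioi (0:ℝ), ENNReal.ofReal (x ^ (-α - 1) * (1 - Real.exp (-x))))
      = ∑' n : ℕ, ENNReal.ofReal ((n:ℝ) ^ α * q n) *
          (∫⁻ x in Ioi (0:ℝ), ENNReal.ofReal (x ^ (-α - 1) * (1 - Real.exp (-x)))) :=
        ENNReal.tsum_mul_right.symm
    _ = ∑' n, ENNReal.ofReal (q n) *
          ∫⁻ t in Ioi (0:ℝ), ENNReal.ofReal (t ^ (-α - 1) * (1 - Real.exp (-((n:ℝ) * t)))) := by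
        refine tsum_congr fun n => ?_
        rcases Nat.eq_zero_or_pos n with hn | hn
        · subst hn; simp [hq0]
        · rw [lint_kernel_one_sub hn, ← mul_assoc, ← ENNReal.ofReal_mul (hqnn n)]
          congr 1
          · congr 1
            ring
    _ = ∫⁻ t in Ioi (0:ℝ),
          ∑' n, ENNReal.ofReal (q n * (t ^ (-α - 1) * (1 - Real.exp (-((n:ℝ) * t))))) := by
        refine interchange q hqnn _ fun n => ?_
        exact (measurable_rpow_c _).mul
          (measurable_const.sub (continuous_const.mul continuous_id).neg.rexp.measurable)
    _ = ∫⁻ t in Ioi (0:ℝ),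
          ENNReal.ofReal (t ^ (-α - 1) * (1 - ∑' n, q n * Real.exp (-t) ^ n)) := by
        refine setLIntegral_congr_fun measurableSet_Ioi ?_
        intro t ht
        have ht0 : (0:ℝ) < t := ht
        have hz1 : Real.exp (-t) ≤ 1 := Real.exp_le_one_iff.mpr (by linarith)
        have hz0 : (0:ℝ) ≤ Real.exp (-t) := (Real.exp_pos _).le
        have hsumz : Summable (fun n => q n * Real.exp (-t) ^ n) :=
          summable_pow_aux hqs hqnn hz0 hz1
        have hsub : Summable (fun n => q n * (1 - Real.exp (-t) ^ n)) := by
          have : (fun n => q n * (1 - Real.exp (-t) ^ n))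
              = fun n => q n - q n * Real.exp (-t) ^ n := by funext n; ring
          rw [this]; exact hqs.sub hsumz
        have htsum : ∑' n, q n * (1 - Real.exp (-t) ^ n)
            = 1 - ∑' n, q n * Real.exp (-t) ^ n := by
          have : (fun n => q n * (1 - Real.exp (-t) ^ n))
              = fun n => q n - q n * Real.exp (-t) ^ n := by funext n; ring
          rw [this, Summable.tsum_sub hqs hsumz, hqsum]
        simp_rw [exp_kernel_eq t]
        rw [← htsum]
        refine tsum_ofReal_mul hqnn (Real.rpow_nonneg ht0.le _) (fun n => ?_) hsub
        have : Real.exp (-t) ^ n ≤ 1 := pow_le_one₀ hz0 hz1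
        linarith

set_option maxHeartbeats 1000000 in
/-- Theorem 6.3 of the paper. If two critical offspring distributions with
variances in `(0,∞)` satisfy `Φ₁ ≤ Φ₂` on `(0,1)`, then `μ₁(α) ≤ μ₂(α)` for `α < 0`,
`μ₁(α) ≥ μ₂(α)` for `0 < α < 1/2`, and `μ₁' ≥ μ₂'`. -/
theorem stmt7
    (p₁ p₂ : ℕ → ℝ) (hp₁ : ∀ k, 0 ≤ p₁ k) (hp₂ : ∀ k, 0 ≤ p₂ k)
    (hpsum₁ : ∑' k, p₁ k = 1) (hpsum₂ : ∑' k, p₂ k = 1)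
    (hcrit₁ : ∑' k : ℕ, (k : ℝ) * p₁ k = 1) (hcrit₂ : ∑' k : ℕ, (k : ℝ) * p₂ k = 1)
    (hσfin₁ : Summable (fun k : ℕ => (k : ℝ) * ((k : ℝ) - 1) * p₁ k))
    (hσfin₂ : Summable (fun k : ℕ => (k : ℝ) * ((k : ℝ) - 1) * p₂ k))
    (hσpos₁ : 0 < ∑' k : ℕ, (k : ℝ) * ((k : ℝ) - 1) * p₁ k)
    (hσpos₂ : 0 < ∑' k : ℕ, (k : ℝ) * ((k : ℝ) - 1) * p₂ k)
    (q₁ q₂ : ℕ → ℝ)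
    (hq₁0 : q₁ 0 = 0) (hq₂0 : q₂ 0 = 0)
    (hq₁nn : ∀ n, 0 ≤ q₁ n) (hq₂nn : ∀ n, 0 ≤ q₂ n)
    (hq₁sum : ∑' n, q₁ n = 1) (hq₂sum : ∑' n, q₂ n = 1)
    (hfix₁ : ∀ z ∈ Set.Icc (0:ℝ) 1,
      (∑' n, q₁ n * z ^ n) = z * ∑' k, p₁ k * (∑' n, q₁ n * z ^ n) ^ k)
    (hfix₂ : ∀ z ∈ Set.Icc (0:ℝ) 1,
      (∑' n, q₂ n * z ^ n) = z * ∑' k, p₂ k * (∑' n, q₂ n * z ^ n) ^ k)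
    (hΦ : ∀ t ∈ Set.Ioo (0:ℝ) 1, (∑' k, p₁ k * t ^ k) ≤ ∑' k, p₂ k * t ^ k) :
    (∀ α : ℝ, α < 0 →
      (∑' n : ℕ, (n : ℝ) ^ α * q₁ n) ≤ ∑' n : ℕ, (n : ℝ) ^ α * q₂ n) ∧
    (∀ α : ℝ, 0 < α → α < 1/2 →
      (∑' n : ℕ, (n : ℝ) ^ α * q₂ n) ≤ ∑' n : ℕ, (n : ℝ) ^ α * q₁ n) ∧
    ((∑' n : ℕ, q₂ n * Real.log n) ≤ ∑' n : ℕ, q₁ n * Real.log n) := by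
  have hqs₁ : Summable q₁ := summable_of_tsum_one hq₁sum
  have hqs₂ : Summable q₂ := summable_of_tsum_one hq₂sum
  -- basic bounds on the generating functions
  have hYfacts : ∀ (q : ℕ → ℝ), (∀ n, 0 ≤ q n) → q 0 = 0 → (∑' n, q n = 1) →
      ∀ z : ℝ, 0 < z → z < 1 →
      0 ≤ (∑' n, q n * z ^ n) ∧ (∑' n, q n * z ^ n) ≤ z := by
    intro q hqnn hq0 hqsum z hz0 hz1
    have hqs : Summable q := summable_of_tsum_one hqsum
    constructor
    · exact tsum_nonneg fun n => mul_nonneg (hqnn n) (pow_nonneg hz0.le n)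
    · calc (∑' n, q n * z ^ n) ≤ ∑' n, q n * z := by
            refine Summable.tsum_le_tsum (fun n => ?_)
              (summable_pow_aux hqs hqnn hz0.le hz1.le) (hqs.mul_right _)
            rcases Nat.eq_zero_or_pos n with hn | hn
            · subst hn; simp [hq0]
            · refine mul_le_mul_of_nonneg_left ?_ (hqnn n)
              calc z ^ n ≤ z ^ 1 := pow_le_pow_of_le_one hz0.le hz1.le hn
                _ = z := pow_one _
        _ = z := by rw [tsum_mul_right, hqsum, one_mul]
  -- monotonicity of the tree generating functions
  have hYle : ∀ z : ℝ, 0 < z → z < 1 →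
      (∑' n, q₁ n * z ^ n) ≤ (∑' n, q₂ n * z ^ n) := by
    intro z hz0 hz1
    have hzIcc : z ∈ Set.Icc (0:ℝ) 1 := ⟨hz0.le, hz1.le⟩
    have hf1 := hYfacts q₁ hq₁nn hq₁0 hq₁sum z hz0 hz1
    have hf2 := hYfacts q₂ hq₂nn hq₂0 hq₂sum z hz0 hz1
    refine fixedpoint_le hp₂ hpsum₂ ⟨hz0, hz1⟩ hf1.1 hf1.2 hf2.1 hf2.2 (hfix₂ z hzIcc) ?_
    rcases eq_or_lt_of_le hf1.1 with h0 | hapos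
    · rw [← h0]
      have : (0:ℝ) ≤ z * ∑' k, p₂ k * (0:ℝ) ^ k := by
        refine mul_nonneg hz0.le (tsum_nonneg fun k => mul_nonneg (hp₂ k) (by positivity))
      simpa [← h0] using this
    · calc (∑' n, q₁ n * z ^ n) = z * ∑' k, p₁ k * (∑' n, q₁ n * z ^ n) ^ k :=
            hfix₁ z hzIcc
        _ ≤ z * ∑' k, p₂ k * (∑' n, q₁ n * z ^ n) ^ k := by
            refine mul_le_mul_of_nonneg_left
              (hΦ _ ⟨hapos, lt_of_le_of_lt hf1.2 hz1⟩) hz0.le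
  -- the variance gives some k₀ ≥ 2 with p₁ k₀ > 0
  have hknn : ∀ k : ℕ, (0:ℝ) ≤ (k:ℝ) * ((k:ℝ) - 1) := by
    intro k
    rcases Nat.eq_zero_or_pos k with hk | hk
    · subst hk; norm_num
    · have : (1:ℝ) ≤ (k:ℝ) := by exact_mod_cast hk
      nlinarith
  obtain ⟨k₀, hk₀pos⟩ : ∃ k : ℕ, 0 < (k:ℝ) * ((k:ℝ) - 1) * p₁ k := by
    by_contra h
    push_neg at h
    have hall : ∀ k : ℕ, (k:ℝ) * ((k:ℝ) - 1) * p₁ k = 0 :=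
      fun k => le_antisymm (h k) (mul_nonneg (hknn k) (hp₁ k))
    have : ∑' k : ℕ, (k:ℝ) * ((k:ℝ) - 1) * p₁ k = 0 := by
      rw [tsum_congr hall]; exact tsum_zero
    rw [this] at hσpos₁; exact lt_irrefl _ hσpos₁
  have hpk₀ : 0 < p₁ k₀ := by
    by_contra h
    push_neg at h
    have : p₁ k₀ = 0 := le_antisymm h (hp₁ k₀)
    rw [this, mul_zero] at hk₀pos; exact lt_irrefl _ hk₀pos
  have hk₀2 : 2 ≤ k₀ := by
    by_contra h
    push_neg at h
    interval_cases k₀ <;> norm_num at hk₀pos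
  set c : ℝ := p₁ k₀ with hcdef
  set K : ℝ := max (Real.sqrt (2 / c)) (Real.sqrt 2) with hKdef
  have hK0 : 0 ≤ K := le_trans (Real.sqrt_nonneg (2 / c)) (le_max_left _ _)
  -- the square-root bound for 1 - Y₁ near t = 0
  have hsqrt : ∀ t : ℝ, 0 < t → t ≤ 1 →
      1 - (∑' n, q₁ n * Real.exp (-t) ^ n) ≤ K * Real.sqrt t := by
    intro t ht0 ht1
    set z : ℝ := Real.exp (-t) with hzdef
    have hz0 : (0:ℝ) < z := Real.exp_pos _
    have hz1 : z < 1 := Real.exp_lt_one_iff.mpr (by linarith)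
    have hf1 := hYfacts q₁ hq₁nn hq₁0 hq₁sum z hz0 hz1
    set a : ℝ := ∑' n, q₁ n * z ^ n with hadef
    have ha1 : a ≤ 1 := le_trans hf1.2 hz1.le
    have h1z : 1 - z ≤ t := by
      have := Real.add_one_le_exp (-t)
      rw [hzdef]; linarith
    have hsz : Real.sqrt (1 - z) ≤ Real.sqrt t := Real.sqrt_le_sqrt h1z
    rcases le_or_gt (1/2 : ℝ) z with hz2 | hz2
    · -- use the pgf lower bound
      have hlow : a + c * (1 - a) ^ 2 ≤ ∑' k, p₁ k * a ^ k :=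
        pgf_lower hp₁ hpsum₁ hcrit₁ hk₀2 hpk₀ hf1.1 ha1
      have hfixa : z * (a + c * (1 - a) ^ 2) ≤ a := by
        calc z * (a + c * (1 - a) ^ 2) ≤ z * ∑' k, p₁ k * a ^ k :=
              mul_le_mul_of_nonneg_left hlow hz0.le
          _ = a := (hfix₁ z ⟨hz0.le, hz1.le⟩).symm
      have hcpos : 0 < c := hpk₀
      calc 1 - a ≤ Real.sqrt (2 / c) * Real.sqrt (1 - z) :=
            sqrt_bound hcpos hz2 hz1 hf1.1 ha1 hfixa
        _ ≤ K * Real.sqrt t := by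
            refine mul_le_mul (le_max_left _ _) hsz (Real.sqrt_nonneg _) hK0
    · -- z < 1/2 : crude bound
      have h12 : (1:ℝ) ≤ Real.sqrt 2 * Real.sqrt (1 - z) := by
        rw [← Real.sqrt_mul (by norm_num : (0:ℝ) ≤ 2)]
        have : (1:ℝ) ≤ 2 * (1 - z) := by linarith
        calc (1:ℝ) = Real.sqrt 1 := Real.sqrt_one.symm
          _ ≤ Real.sqrt (2 * (1 - z)) := Real.sqrt_le_sqrt this
      calc 1 - a ≤ 1 := by linarith [hf1.1]
        _ ≤ Real.sqrt 2 * Real.sqrt (1 - z) := h12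
        _ ≤ K * Real.sqrt t := by
            refine mul_le_mul (le_max_right _ _) hsz (Real.sqrt_nonneg _) hK0
  have hYub : ∀ (q : ℕ → ℝ), (∀ n, 0 ≤ q n) → q 0 = 0 → (∑' n, q n = 1) →
      ∀ t : ℝ, 0 < t → 1 - (∑' n, q n * Real.exp (-t) ^ n) ≤ 1 := by
    intro q hqnn hq0 hqsum t ht
    have hz0 : (0:ℝ) < Real.exp (-t) := Real.exp_pos _
    have hz1 : Real.exp (-t) < 1 := Real.exp_lt_one_iff.mpr (by linarith)
    linarith [(hYfacts q hqnn hq0 hqsum _ hz0 hz1).1]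
  -- conversion between ENNReal sums and real sums
  have hsummableS : ∀ (q : ℕ → ℝ), (∀ n, 0 ≤ q n) → ∀ α : ℝ,
      (∑' n : ℕ, ENNReal.ofReal ((n:ℝ) ^ α * q n)) ≠ ⊤ →
      Summable (fun n : ℕ => (n:ℝ) ^ α * q n) := by
    intro q hqnn α htop
    refine (ENNReal.summable_toReal htop).congr fun n => ?_
    exact ENNReal.toReal_ofReal (mul_nonneg (Real.rpow_nonneg (Nat.cast_nonneg n) α) (hqnn n))
  -- part (ii) with summability
  have key2 : ∀ α : ℝ, 0 < α → α < 1/2 →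
      ((∑' n : ℕ, (n : ℝ) ^ α * q₂ n) ≤ ∑' n : ℕ, (n : ℝ) ^ α * q₁ n) ∧
      Summable (fun n : ℕ => (n:ℝ) ^ α * q₁ n) ∧
      Summable (fun n : ℕ => (n:ℝ) ^ α * q₂ n) := by
    intro α hα0 hα2
    set G : ℝ≥0∞ := ∫⁻ x in Ioi (0:ℝ), ENNReal.ofReal (x ^ (-α - 1) * (1 - Real.exp (-x)))
      with hGdef
    have hGpos : 0 < G := Gc_pos hα0
    have hGfin : G < ⊤ := by
      refine lint_fin hα0 hα2 zero_le_one (fun x => 1 - Real.exp (-x)) ?_ ?_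
      · intro t ht0 ht1
        have h1 : 1 - Real.exp (-t) ≤ t := by nlinarith [Real.add_one_le_exp (-t)]
        have hle1 : Real.sqrt t ≤ 1 := by
          rw [show (1:ℝ) = Real.sqrt 1 from Real.sqrt_one.symm]
          exact Real.sqrt_le_sqrt ht1
        have h2 : t ≤ Real.sqrt t := by
          nth_rewrite 1 [← Real.mul_self_sqrt ht0.le]
          calc Real.sqrt t * Real.sqrt t ≤ Real.sqrt t * 1 :=
                mul_le_mul_of_nonneg_left hle1 (Real.sqrt_nonneg t)
            _ = Real.sqrt t := mul_one _
        nlinarith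
      · intro t ht
        linarith [Real.exp_pos (-t)]
    have hc1 := chain_one_sub hα0 q₁ hq₁nn hq₁0 hq₁sum
    have hc2 := chain_one_sub hα0 q₂ hq₂nn hq₂0 hq₂sum
    set S₁ : ℝ≥0∞ := ∑' n : ℕ, ENNReal.ofReal ((n:ℝ) ^ α * q₁ n) with hS₁def
    set S₂ : ℝ≥0∞ := ∑' n : ℕ, ENNReal.ofReal ((n:ℝ) ^ α * q₂ n) with hS₂def
    have hmono : ∫⁻ t in Ioi (0:ℝ),
          ENNReal.ofReal (t ^ (-α - 1) * (1 - ∑' n, q₂ n * Real.exp (-t) ^ n))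
        ≤ ∫⁻ t in Ioi (0:ℝ),
          ENNReal.ofReal (t ^ (-α - 1) * (1 - ∑' n, q₁ n * Real.exp (-t) ^ n)) := by
      refine setLIntegral_mono' measurableSet_Ioi fun t ht => ?_
      have ht0 : (0:ℝ) < t := ht
      have hz0 : (0:ℝ) < Real.exp (-t) := Real.exp_pos _
      have hz1 : Real.exp (-t) < 1 := Real.exp_lt_one_iff.mpr (by linarith)
      refine ENNReal.ofReal_le_ofReal ?_
      refine mul_le_mul_of_nonneg_left ?_ (Real.rpow_nonneg ht0.le _)
      linarith [hYle _ hz0 hz1]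
    have hSle : S₂ * G ≤ S₁ * G := by rw [hc2, hc1]; exact hmono
    have hfin1 : S₁ * G < ⊤ := by
      rw [hc1]
      refine lint_fin hα0 hα2 hK0 (fun t => 1 - ∑' n, q₁ n * Real.exp (-t) ^ n)
        hsqrt (hYub q₁ hq₁nn hq₁0 hq₁sum)
    have hS1top : S₁ ≠ ⊤ := by
      intro h
      rw [h, ENNReal.top_mul hGpos.ne'] at hfin1
      exact lt_irrefl _ hfin1
    have hSle' : S₂ ≤ S₁ := (ENNReal.mul_le_mul_iff_left hGpos.ne' hGfin.ne).mp hSle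
    have hS2top : S₂ ≠ ⊤ := ne_top_of_le_ne_top hS1top hSle'
    have hsm1 := hsummableS q₁ hq₁nn α hS1top
    have hsm2 := hsummableS q₂ hq₂nn α hS2top
    refine ⟨?_, hsm1, hsm2⟩
    have h1 : ENNReal.ofReal (∑' n : ℕ, (n:ℝ) ^ α * q₁ n) = S₁ :=
      ENNReal.ofReal_tsum_of_nonneg
        (fun n => mul_nonneg (Real.rpow_nonneg (Nat.cast_nonneg n) α) (hq₁nn n)) hsm1
    have h2 : ENNReal.ofReal (∑' n : ℕ, (n:ℝ) ^ α * q₂ n) = S₂ :=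
      ENNReal.ofReal_tsum_of_nonneg
        (fun n => mul_nonneg (Real.rpow_nonneg (Nat.cast_nonneg n) α) (hq₂nn n)) hsm2
    rw [← ENNReal.ofReal_le_ofReal_iff
      (tsum_nonneg fun n => mul_nonneg (Real.rpow_nonneg (Nat.cast_nonneg n) α) (hq₁nn n)),
      h1, h2]
    exact hSle'
  refine ⟨?_, fun α hα0 hα2 => (key2 α hα0 hα2).1, ?_⟩
  · -- part (i) : α < 0
    intro α hα
    have hc1 := chain_exp hα q₁ hq₁nn hq₁0 hq₁sum
    have hc2 := chain_exp hα q₂ hq₂nn hq₂0 hq₂sum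
    set S₁ : ℝ≥0∞ := ∑' n : ℕ, ENNReal.ofReal ((n:ℝ) ^ α * q₁ n) with hS₁def
    set S₂ : ℝ≥0∞ := ∑' n : ℕ, ENNReal.ofReal ((n:ℝ) ^ α * q₂ n) with hS₂def
    have hΓpos : 0 < Real.Gamma (-α) := Real.Gamma_pos_of_pos (by linarith)
    have hmono : ∫⁻ t in Ioi (0:ℝ),
          ENNReal.ofReal (t ^ (-α - 1) * ∑' n, q₁ n * Real.exp (-t) ^ n)
        ≤ ∫⁻ t in Ioi (0:ℝ),
          ENNReal.ofReal (t ^ (-α - 1) * ∑' n, q₂ n * Real.exp (-t) ^ n) := by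
      refine setLIntegral_mono' measurableSet_Ioi fun t ht => ?_
      have ht0 : (0:ℝ) < t := ht
      have hz0 : (0:ℝ) < Real.exp (-t) := Real.exp_pos _
      have hz1 : Real.exp (-t) < 1 := Real.exp_lt_one_iff.mpr (by linarith)
      exact ENNReal.ofReal_le_ofReal (mul_le_mul_of_nonneg_left
        (hYle _ hz0 hz1) (Real.rpow_nonneg ht0.le _))
    have hSle : S₁ ≤ S₂ := by
      refine (ENNReal.mul_le_mul_iff_left (ENNReal.ofReal_pos.mpr hΓpos).ne'
        ENNReal.ofReal_ne_top).mp ?_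
      rw [hc1, hc2]; exact hmono
    have hbnd : ∀ (q : ℕ → ℝ), (∀ n, 0 ≤ q n) → Summable q → (∑' n, q n = 1) →
        (∑' n : ℕ, ENNReal.ofReal ((n:ℝ) ^ α * q n)) ≤ ENNReal.ofReal 1 := by
      intro q hqnn hqs hqsum
      calc (∑' n : ℕ, ENNReal.ofReal ((n:ℝ) ^ α * q n))
          ≤ ∑' n : ℕ, ENNReal.ofReal (q n) := by
            refine ENNReal.tsum_le_tsum fun n => ENNReal.ofReal_le_ofReal ?_
            rcases Nat.eq_zero_or_pos n with hn | hn
            · subst hn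
              rw [Nat.cast_zero, Real.zero_rpow hα.ne, zero_mul]
              exact hqnn 0
            · have h1 : (n:ℝ) ^ α ≤ 1 :=
                Real.rpow_le_one_of_one_le_of_nonpos (by exact_mod_cast hn) hα.le
              calc (n:ℝ) ^ α * q n ≤ 1 * q n := mul_le_mul_of_nonneg_right h1 (hqnn n)
                _ = q n := one_mul _
        _ = ENNReal.ofReal 1 := by
            rw [← ENNReal.ofReal_tsum_of_nonneg hqnn hqs, hqsum]
    have hS2top : S₂ ≠ ⊤ :=
      (lt_of_le_of_lt (hbnd q₂ hq₂nn hqs₂ hq₂sum) ENNReal.ofReal_lt_top).ne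
    have hS1top : S₁ ≠ ⊤ := ne_top_of_le_ne_top hS2top hSle
    have hsm1 := hsummableS q₁ hq₁nn α hS1top
    have hsm2 := hsummableS q₂ hq₂nn α hS2top
    have h1 : ENNReal.ofReal (∑' n : ℕ, (n:ℝ) ^ α * q₁ n) = S₁ :=
      ENNReal.ofReal_tsum_of_nonneg
        (fun n => mul_nonneg (Real.rpow_nonneg (Nat.cast_nonneg n) α) (hq₁nn n)) hsm1
    have h2 : ENNReal.ofReal (∑' n : ℕ, (n:ℝ) ^ α * q₂ n) = S₂ :=
      ENNReal.ofReal_tsum_of_nonneg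
        (fun n => mul_nonneg (Real.rpow_nonneg (Nat.cast_nonneg n) α) (hq₂nn n)) hsm2
    rw [← ENNReal.ofReal_le_ofReal_iff
      (tsum_nonneg fun n => mul_nonneg (Real.rpow_nonneg (Nat.cast_nonneg n) α) (hq₂nn n)),
      h1, h2]
    exact hSle
  · -- part (iii)
    have h49 := key2 (4/9) (by norm_num) (by norm_num)
    -- dominated convergence towards the log-sum, for a single system
    have main : ∀ (q : ℕ → ℝ), (∀ n, 0 ≤ q n) → q 0 = 0 → (∑' n, q n = 1) →
        Summable (fun n : ℕ => (n:ℝ) ^ ((4:ℝ)/9) * q n) →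
        Tendsto (fun j : ℕ => ∑' n : ℕ,
            ((n:ℝ) ^ (1/((j:ℝ)+3)) - 1) / (1/((j:ℝ)+3)) * q n)
          atTop (𝓝 (∑' n : ℕ, q n * Real.log n)) := by
      intro q hqnn hq0 hqsum hsq
      refine tendsto_tsum_of_dominated_convergence
        (bound := fun n : ℕ => 9 * ((n:ℝ) ^ ((4:ℝ)/9) * q n)) (hsq.mul_left 9) ?_ ?_
      · -- pointwise limits
        intro n
        rcases Nat.eq_zero_or_pos n with hn | hn
        · subst hn
          simp only [hq0, mul_zero, Nat.cast_zero, zero_mul]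
          exact tendsto_const_nhds
        · have hn1 : (1:ℝ) ≤ (n:ℝ) := by exact_mod_cast hn
          have hnpos : (0:ℝ) < (n:ℝ) := by linarith
          have hd : HasDerivAt (fun s : ℝ => (n:ℝ) ^ s) (Real.log n) 0 := by
            have h1 : HasDerivAt (fun s : ℝ => s * Real.log n) (Real.log n) 0 := by
              simpa using (hasDerivAt_id (0:ℝ)).mul_const (Real.log n)
            have h2 := h1.exp
            simp only [zero_mul, Real.exp_zero, one_mul] at h2
            refine h2.congr_of_eventuallyEq (Eventually.of_forall fun s => ?_)
            show (n:ℝ) ^ s = Real.exp (s * Real.log n)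
            rw [Real.rpow_def_of_pos hnpos, mul_comm]
          have hslope := hasDerivAt_iff_tendsto_slope.mp hd
          have hαt : Tendsto (fun j : ℕ => 1/((j:ℝ)+3)) atTop (𝓝[≠] (0:ℝ)) := by
            refine tendsto_nhdsWithin_of_tendsto_nhds_of_eventually_within _ ?_ ?_
            · have h3 : Tendsto (fun j : ℕ => (j:ℝ)+3) atTop atTop :=
                tendsto_atTop_add_const_right _ 3 tendsto_natCast_atTop_atTop
              refine h3.inv_tendsto_atTop.congr fun j => ?_
              simp [one_div]
            · refine Eventually.of_forall fun j => ?_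
              simp only [mem_compl_iff, mem_singleton_iff]
              positivity
          have hcomp := hslope.comp hαt
          have hcomp' : Tendsto (fun j : ℕ => ((n:ℝ) ^ (1/((j:ℝ)+3)) - 1) / (1/((j:ℝ)+3)))
              atTop (𝓝 (Real.log n)) := by
            refine hcomp.congr fun j => ?_
            show slope (fun s : ℝ => (n:ℝ) ^ s) 0 (1/((j:ℝ)+3)) = _
            rw [slope_def_field, Real.rpow_zero, sub_zero]
          simpa [mul_comm] using hcomp'.mul_const (q n)
      · -- domination
        refine Eventually.of_forall fun j => fun n => ?_
        rcases Nat.eq_zero_or_pos n with hn | hn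
        · subst hn
          simp only [hq0, mul_zero, norm_zero]
          positivity
        · have hn1 : (1:ℝ) ≤ (n:ℝ) := by exact_mod_cast hn
          have hnpos : (0:ℝ) < (n:ℝ) := by linarith
          set aj : ℝ := 1/((j:ℝ)+3) with haj
          have haj0 : 0 < aj := by positivity
          have hajle : aj ≤ 1/3 := by
            rw [haj]
            refine one_div_le_one_div_of_le (by norm_num) (by
              have : (0:ℝ) ≤ (j:ℝ) := Nat.cast_nonneg j
              linarith)
          set L : ℝ := Real.log n with hL
          have hL0 : 0 ≤ L := Real.log_nonneg hn1
          have hone : (1:ℝ) ≤ (n:ℝ) ^ aj := by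
            rw [show (1:ℝ) = (n:ℝ) ^ (0:ℝ) from (Real.rpow_zero _).symm]
            exact Real.rpow_le_rpow_of_exponent_le hn1 haj0.le
          have hrpow_exp : (n:ℝ) ^ aj = Real.exp (aj * L) := by
            rw [Real.rpow_def_of_pos hnpos, mul_comm]
          have hexp : Real.exp (aj * L) - 1 ≤ (aj * L) * Real.exp (aj * L) := by
            have h := Real.add_one_le_exp (-(aj * L))
            have h2 := mul_le_mul_of_nonneg_right h (Real.exp_pos (aj * L)).le
            rw [← Real.exp_add, neg_add_cancel, Real.exp_zero] at h2
            nlinarith [Real.exp_pos (aj * L)]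
          have hkey : ((n:ℝ) ^ aj - 1) / aj ≤ L * (n:ℝ) ^ aj := by
            rw [div_le_iff₀ haj0, hrpow_exp]
            have hring : (aj * L) * Real.exp (aj * L) = L * Real.exp (aj * L) * aj := by ring
            linarith [hexp, hring]
          have hmono3 : (n:ℝ) ^ aj ≤ (n:ℝ) ^ ((1:ℝ)/3) :=
            Real.rpow_le_rpow_of_exponent_le hn1 hajle
          have hlog : L ≤ 9 * (n:ℝ) ^ ((1:ℝ)/9) := by
            have h := Real.log_le_rpow_div (Nat.cast_nonneg n) (by norm_num : (0:ℝ) < 1/9)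
            have h9 : (n:ℝ) ^ ((1:ℝ)/9) / (1/9) = 9 * (n:ℝ) ^ ((1:ℝ)/9) := by ring
            rw [h9] at h
            exact h
          have hprod : (n:ℝ) ^ ((1:ℝ)/9) * (n:ℝ) ^ ((1:ℝ)/3) = (n:ℝ) ^ ((4:ℝ)/9) := by
            rw [← Real.rpow_add hnpos]
            norm_num
          have hpos9 : (0:ℝ) ≤ (n:ℝ) ^ ((1:ℝ)/9) := Real.rpow_nonneg hnpos.le _
          have hpos3 : (0:ℝ) ≤ (n:ℝ) ^ ((1:ℝ)/3) := Real.rpow_nonneg hnpos.le _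
          have hfnn : 0 ≤ ((n:ℝ) ^ aj - 1) / aj * q n :=
            mul_nonneg (div_nonneg (by linarith) haj0.le) (hqnn n)
          rw [Real.norm_eq_abs, abs_of_nonneg hfnn]
          have hstep : ((n:ℝ) ^ aj - 1) / aj * q n ≤ (L * (n:ℝ) ^ ((1:ℝ)/3)) * q n := by
            refine mul_le_mul_of_nonneg_right ?_ (hqnn n)
            calc ((n:ℝ) ^ aj - 1) / aj ≤ L * (n:ℝ) ^ aj := hkey
              _ ≤ L * (n:ℝ) ^ ((1:ℝ)/3) := mul_le_mul_of_nonneg_left hmono3 hL0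
          refine le_trans hstep ?_
          have : L * (n:ℝ) ^ ((1:ℝ)/3) ≤ 9 * (n:ℝ) ^ ((1:ℝ)/9) * (n:ℝ) ^ ((1:ℝ)/3) :=
            mul_le_mul_of_nonneg_right hlog hpos3
          calc L * (n:ℝ) ^ ((1:ℝ)/3) * q n
              ≤ 9 * (n:ℝ) ^ ((1:ℝ)/9) * (n:ℝ) ^ ((1:ℝ)/3) * q n :=
                mul_le_mul_of_nonneg_right this (hqnn n)
            _ = 9 * ((n:ℝ) ^ ((4:ℝ)/9) * q n) := by rw [mul_assoc 9, hprod, mul_assoc]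
    -- per-j comparison
    have perj : ∀ j : ℕ,
        (∑' n : ℕ, ((n:ℝ) ^ (1/((j:ℝ)+3)) - 1) / (1/((j:ℝ)+3)) * q₂ n)
          ≤ ∑' n : ℕ, ((n:ℝ) ^ (1/((j:ℝ)+3)) - 1) / (1/((j:ℝ)+3)) * q₁ n := by
      intro j
      set aj : ℝ := 1/((j:ℝ)+3) with haj
      have haj0 : 0 < aj := by positivity
      have haj2 : aj < 1/2 := by
        rw [haj]
        refine one_div_lt_one_div_of_lt (by norm_num) (by
          have : (0:ℝ) ≤ (j:ℝ) := Nat.cast_nonneg j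
          linarith)
      obtain ⟨hineq, hsm1, hsm2⟩ := key2 aj haj0 haj2
      have hrw : ∀ (q : ℕ → ℝ), (∑' n, q n = 1) →
          Summable (fun n : ℕ => (n:ℝ) ^ aj * q n) →
          (∑' n : ℕ, ((n:ℝ) ^ aj - 1) / aj * q n)
            = (1/aj) * ((∑' n : ℕ, (n:ℝ) ^ aj * q n) - 1) := by
        intro q hqsum hsm
        have hqs : Summable q := summable_of_tsum_one hqsum
        calc (∑' n : ℕ, ((n:ℝ) ^ aj - 1) / aj * q n)
            = ∑' n : ℕ, (1/aj) * ((n:ℝ) ^ aj * q n - q n) := by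
              refine tsum_congr fun n => ?_
              field_simp
          _ = (1/aj) * ∑' n : ℕ, ((n:ℝ) ^ aj * q n - q n) := tsum_mul_left
          _ = (1/aj) * ((∑' n : ℕ, (n:ℝ) ^ aj * q n) - ∑' n, q n) := by
              rw [Summable.tsum_sub hsm hqs]
          _ = (1/aj) * ((∑' n : ℕ, (n:ℝ) ^ aj * q n) - 1) := by rw [hqsum]
      rw [hrw q₁ hq₁sum hsm1, hrw q₂ hq₂sum hsm2]
      refine mul_le_mul_of_nonneg_left (by linarith) (by positivity)
    exact le_of_tendsto_of_tendsto'
      (main q₂ hq₂nn hq₂0 hq₂sum h49.2.2) (main q₁ hq₁nn hq₁0 hq₁sum h49.2.1) perj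
end

section
/- For every real t ∈ (0,1) and every integer m ≥ 2, the following chain of strict inequalities holds: ((m−1+t)/m)^m < e^{t−1} < (1+t²)/2 < 1/(2−t) < (2+t³)/3. -/
lemma cubic_le_exp_of_nonneg {x : ℝ} (hx : 0 ≤ x) :
    1 + x + x ^ 2 / 2 + x ^ 3 / 6 ≤ Real.exp x := by
  have h := Real.sum_le_exp_of_nonneg hx 4
  simp [Finset.sum_range_succ, Nat.factorial] at h
  linarith

/-- part of Lemma 6.12. For `t ∈ (0,1)` and integers `m ≥ 2`:
`((m−1+t)/m)^m < e^{t−1} < (1+t²)/2 < 1/(2−t) < (2+t³)/3`. -/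
theorem stmt11 (t : ℝ) (ht0 : 0 < t) (ht1 : t < 1) (m : ℕ) (hm : 2 ≤ m) :
    (((m : ℝ) - 1 + t) / m) ^ m < Real.exp (t - 1) ∧
    Real.exp (t - 1) < (1 + t ^ 2) / 2 ∧
    (1 + t ^ 2) / 2 < 1 / (2 - t) ∧
    1 / (2 - t) < (2 + t ^ 3) / 3 := by
  have hm0 : (0:ℝ) < m := by positivity
  refine ⟨?_, ?_, ?_, ?_⟩
  · have hbase : ((m : ℝ) - 1 + t) / m = 1 + (t - 1) / m := by
      field_simp; ring
    have hne : (t - 1) / m ≠ 0 := by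
      intro h
      have := (div_eq_zero_iff.mp h)
      rcases this with h1 | h1 <;> [linarith; exact absurd h1 hm0.ne']
    have h1 : (t - 1) / m + 1 < Real.exp ((t - 1) / m) := Real.add_one_lt_exp hne
    have hpos : (0:ℝ) ≤ 1 + (t - 1) / m := by
      have : -1 < (t - 1) / m := by
        rw [neg_lt, ← neg_div]
        calc (-(t-1))/m ≤ (-(t-1))/1 := by
              apply div_le_div_of_nonneg_left (by linarith) one_pos
              exact_mod_cast Nat.one_le_iff_ne_zero.mpr (by omega)
          _ < 1 := by linarith
      linarith
    calc (((m : ℝ) - 1 + t) / m) ^ m = (1 + (t-1)/m) ^ m := by rw [hbase]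
      _ < Real.exp ((t-1)/m) ^ m := by
          apply pow_lt_pow_left₀ (by linarith) hpos (by omega)
      _ = Real.exp (m * ((t-1)/m)) := (Real.exp_nat_mul _ m).symm
      _ = Real.exp (t - 1) := by rw [mul_div_cancel₀ _ hm0.ne']
  · have h1t : (0:ℝ) < 1 - t := by linarith
    have h := cubic_le_exp_of_nonneg h1t.le
    have hexp : Real.exp (t - 1) = 1 / Real.exp (1 - t) := by
      rw [eq_div_iff (Real.exp_pos _).ne', ← Real.exp_add]
      norm_num
    rw [hexp, div_lt_div_iff₀ (Real.exp_pos _) two_pos]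
    have h2 : (1 + (1-t) + (1-t)^2/2 + (1-t)^3/6) * (1 + t^2) ≤ Real.exp (1-t) * (1 + t^2) := by
      apply mul_le_mul_of_nonneg_right h (by positivity)
    have key : (2:ℝ) < (1 + (1-t) + (1-t)^2/2 + (1-t)^3/6) * (1 + t^2) := by
      nlinarith [pow_pos h1t 4, mul_pos (pow_pos h1t 3) (by positivity : (0:ℝ) < 1 + t^2)]
    linarith
  · rw [div_lt_div_iff₀ two_pos (by linarith : (0:ℝ) < 2 - t)]
    nlinarith [mul_pos ht0 (pow_pos (by linarith : (0:ℝ) < 1 - t) 2)]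
  · rw [div_lt_div_iff₀ (by linarith : (0:ℝ) < 2 - t) (by norm_num : (0:ℝ) < 3)]
    nlinarith [mul_pos (pow_pos (by linarith : (0:ℝ) < 1 - t) 3) (by linarith : (0:ℝ) < 1 + t)]
end

section
/- Let ξ be a nonnegative real-valued random variable with Laplace transform f(t) = E e^{−tξ} and moments m_j = E ξ^j ∈ [0,∞] (with m_0 = 1). Let r be a positive integer and suppose m_{r−1} < ∞. Define, for t > 0, g(t) := (−1)^r t^{−r} r! [ f(t) − ∑_{j=0}^{r−1} (−1)^j m_j t^j / j! ]. Then g(t) ≥ 0 for all t > 0, g is nonincreasing on (0,∞), and g(t) → m_r in [0,∞] as t ↓ 0. -/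
open MeasureTheory

/-- `Rfun r y = (-1)^r (e^{-y} - ∑_{j<r} (-y)^j/j!)`, the (signed) Taylor remainder. -/
noncomputable def Rfun (r : ℕ) (y : ℝ) : ℝ :=
  (-1) ^ r * (Real.exp (-y) - ∑ j ∈ Finset.range r, (-y) ^ j / j.factorial)

lemma Rfun_zero_eq (y : ℝ) : Rfun 0 y = Real.exp (-y) := by simp [Rfun]

lemma Rfun_at_zero {r : ℕ} (hr : 1 ≤ r) : Rfun r 0 = 0 := by
  have h : ∑ j ∈ Finset.range r, ((0:ℝ) ^ j / j.factorial) = 1 := by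
    rw [Finset.sum_eq_single_of_mem 0 (Finset.mem_range.2 hr)]
    · simp
    · intro j _ hj; simp [zero_pow hj]
  simp [Rfun, neg_zero, h]

lemma Rfun_continuous (r : ℕ) : Continuous (Rfun r) := by
  unfold Rfun
  refine continuous_const.mul ((Real.continuous_exp.comp continuous_neg).sub ?_)
  exact continuous_finset_sum _ fun j _ => ((continuous_pow j).comp continuous_neg).div_const _

lemma Rfun_hasDerivAt (r : ℕ) (y : ℝ) : HasDerivAt (Rfun (r+1)) (Rfun r y) y := by
  have hexp : HasDerivAt (fun y : ℝ => Real.exp (-y)) (-Real.exp (-y)) y := by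
    exact ((Real.hasDerivAt_exp (-y)).comp y (hasDerivAt_neg y)).congr_deriv (by ring)
  have h1 : ∀ j : ℕ, HasDerivAt (fun y : ℝ => (-y) ^ j / j.factorial)
      ((j : ℝ) * (-y) ^ (j-1) * (-1) / j.factorial) y := by
    intro j
    exact (((hasDerivAt_pow j (-y)).comp y (hasDerivAt_neg y))).div_const _
  have hsum : HasDerivAt (fun y : ℝ => ∑ j ∈ Finset.range (r+1), (-y) ^ j / j.factorial)
      (-∑ j ∈ Finset.range r, (-y) ^ j / j.factorial) y := by
    have hS := HasDerivAt.fun_sum (fun j (_ : j ∈ Finset.range (r+1)) => h1 j)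
    refine hS.congr_deriv (Eq.symm ?_)
    rw [Finset.sum_range_succ']
    simp only [Nat.cast_zero, pow_zero, Nat.factorial_zero, Nat.cast_one, zero_mul,
      mul_one, zero_div, add_zero, Nat.add_sub_cancel]
    rw [← Finset.sum_neg_distrib]
    apply Finset.sum_congr rfl
    intro k _
    have hfac : ((k+1).factorial : ℝ) = (k+1) * k.factorial := by
      push_cast [Nat.factorial_succ]; ring
    have hkfac : (k.factorial : ℝ) ≠ 0 := by exact_mod_cast k.factorial_ne_zero
    rw [hfac]
    push_cast
    field_simp
  have hfinal := (hexp.sub hsum).const_mul ((-1:ℝ)^(r+1))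
  have heq : (-1:ℝ)^(r+1) * (-Real.exp (-y) - -∑ j ∈ Finset.range r, (-y) ^ j / j.factorial)
      = Rfun r y := by
    unfold Rfun
    rw [pow_succ]
    ring
  rw [heq] at hfinal
  exact hfinal

lemma nonneg_of_deriv (f f' : ℝ → ℝ) (hd : ∀ y, HasDerivAt f (f' y) y)
    (h0 : f 0 = 0) (h' : ∀ y, 0 ≤ y → 0 ≤ f' y) : ∀ y, 0 ≤ y → 0 ≤ f y := by
  intro y hy
  have hmono : MonotoneOn f (Set.Ici 0) := by
    apply monotoneOn_of_deriv_nonneg (convex_Ici 0)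
    · exact fun x _ => (hd x).continuousAt.continuousWithinAt
    · intro x hx
      exact ((hd x).differentiableAt).differentiableWithinAt
    · intro x hx
      rw [interior_Ici] at hx
      rw [(hd x).deriv]
      exact h' x (le_of_lt hx)
  have := hmono Set.self_mem_Ici (Set.mem_Ici.2 hy) hy
  simpa [h0] using this

lemma Rfun_nonneg : ∀ r : ℕ, ∀ y : ℝ, 0 ≤ y → 0 ≤ Rfun r y := by
  intro r
  induction r with
  | zero => intro y _; rw [Rfun_zero_eq]; positivity
  | succ n ih =>
    exact nonneg_of_deriv _ _ (Rfun_hasDerivAt n) (Rfun_at_zero (Nat.succ_le_succ (Nat.zero_le n))) ih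

lemma Rfun_succ (r : ℕ) (y : ℝ) : Rfun (r+1) y = y ^ r / r.factorial - Rfun r y := by
  have hmm : ((-1:ℝ))^(r*2) = 1 := by
    rw [mul_comm, pow_mul]; norm_num
  have hnp : (-y) ^ r = (-1) ^ r * y ^ r := by
    rw [neg_pow]
  simp only [Rfun, Finset.sum_range_succ, pow_succ]
  rw [hnp]
  linear_combination (y ^ r / (r.factorial : ℝ)) * hmm

lemma Rfun_le (r : ℕ) (y : ℝ) (hy : 0 ≤ y) : Rfun r y ≤ y ^ r / r.factorial := by
  have h := Rfun_nonneg (r+1) y hy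
  rw [Rfun_succ] at h
  linarith

lemma Rfun_ge (r : ℕ) (y : ℝ) (hy : 0 ≤ y) :
    y ^ r / r.factorial - y ^ (r+1) / (r+1).factorial ≤ Rfun r y := by
  have h := Rfun_le (r+1) y hy
  rw [Rfun_succ] at h
  linarith

lemma Rfun_H : ∀ r : ℕ, ∀ y : ℝ, 0 ≤ y →
    0 ≤ ((r:ℝ)+1) * Rfun (r+1) y - y * Rfun r y := by
  intro r
  induction r with
  | zero =>
      apply nonneg_of_deriv _ (fun y => y * Real.exp (-y))
      · intro y
        have h1 : HasDerivAt (Rfun 1) (Rfun 0 y) y := Rfun_hasDerivAt 0 y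
        have h0 : HasDerivAt (fun y : ℝ => Rfun 0 y) (-Real.exp (-y)) y := by
          have : HasDerivAt (fun y : ℝ => Real.exp (-y)) (-Real.exp (-y)) y := by
            exact ((Real.hasDerivAt_exp (-y)).comp y (hasDerivAt_neg y)).congr_deriv (by ring)
          simpa [Rfun_zero_eq] using this
        have h2 : HasDerivAt (fun y : ℝ => y * Rfun 0 y)
            (1 * Rfun 0 y + y * (-Real.exp (-y))) y := (hasDerivAt_id y).mul h0
        have h3 := (h1.const_mul ((0:ℝ)+1)).sub h2
        refine (h3.congr_deriv ?_).congr_of_eventuallyEq (Filter.Eventually.of_forall fun z => ?_)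
        · rw [Rfun_zero_eq]; ring
        · norm_num
      · simp [Rfun_at_zero]
      · intro y hy; positivity
  | succ n ih =>
      apply nonneg_of_deriv _ (fun y => ((n:ℝ)+1) * Rfun (n+1) y - y * Rfun n y)
      · intro y
        have h1 := (Rfun_hasDerivAt (n+1) y).const_mul (((n+1:ℕ):ℝ)+1)
        have h2 : HasDerivAt (fun y : ℝ => y * Rfun (n+1) y)
            (1 * Rfun (n+1) y + y * Rfun n y) y :=
          (hasDerivAt_id y).mul (Rfun_hasDerivAt n y)
        have h3 := h1.sub h2
        refine h3.congr_deriv ?_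
        push_cast
        ring
      · simp [Rfun_at_zero]
      · exact ih

lemma Rfun_div_antitone {r : ℕ} (hr : 1 ≤ r) :
    AntitoneOn (fun y => Rfun r y / y ^ r) (Set.Ioi (0:ℝ)) := by
  obtain ⟨k, rfl⟩ : ∃ k, r = k + 1 := ⟨r - 1, (Nat.succ_pred_eq_of_pos hr).symm⟩
  apply antitoneOn_of_deriv_nonpos (convex_Ioi 0)
  · intro y hy
    have hy0 : (0:ℝ) < y := hy
    exact (((Rfun_hasDerivAt k y).div (hasDerivAt_pow (k+1) y)
      (pow_ne_zero _ (ne_of_gt hy0))).continuousAt).continuousWithinAt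
  · intro y hy
    rw [interior_Ioi] at hy
    have hy0 : (0:ℝ) < y := hy
    exact (((Rfun_hasDerivAt k y).div (hasDerivAt_pow (k+1) y)
      (pow_ne_zero _ (ne_of_gt hy0))).differentiableAt).differentiableWithinAt
  · intro y hy
    rw [interior_Ioi] at hy
    have hy0 : (0:ℝ) < y := hy
    have hd := (Rfun_hasDerivAt k y).fun_div (hasDerivAt_pow (k+1) y)
      (pow_ne_zero _ (ne_of_gt hy0))
    rw [hd.deriv]
    apply div_nonpos_of_nonpos_of_nonneg
    · simp only [Nat.add_sub_cancel, pow_succ]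
      have hH := Rfun_H k y hy0.le
      have hyk : (0:ℝ) ≤ y ^ k := by positivity
      push_cast
      nlinarith [hH, hyk]
    · positivity

lemma psi_anti {r : ℕ} (hr : 1 ≤ r) {x t1 t2 : ℝ} (hx : 0 ≤ x)
    (h1 : 0 < t1) (h12 : t1 ≤ t2) :
    Rfun r (t2 * x) / t2 ^ r ≤ Rfun r (t1 * x) / t1 ^ r := by
  rcases eq_or_lt_of_le hx with hx0 | hx0
  · simp [← hx0, Rfun_at_zero hr]
  · have h2 : 0 < t2 := lt_of_lt_of_le h1 h12
    have key := Rfun_div_antitone hr (Set.mem_Ioi.2 (mul_pos h1 hx0))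
      (Set.mem_Ioi.2 (mul_pos h2 hx0)) (mul_le_mul_of_nonneg_right h12 hx0.le)
    have hxr : (0:ℝ) < x ^ r := pow_pos hx0 r
    have e2 : Rfun r (t2*x) / t2 ^ r = x ^ r * (Rfun r (t2*x) / (t2*x) ^ r) := by
      rw [mul_pow]; field_simp
    have e1 : Rfun r (t1*x) / t1 ^ r = x ^ r * (Rfun r (t1*x) / (t1*x) ^ r) := by
      rw [mul_pow]; field_simp
    rw [e1, e2]
    exact mul_le_mul_of_nonneg_left key hxr.le

/-- Theorem C.1 of the paper. Let `ξ ≥ 0` be a random variable with Laplace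
transform `f(t) = E e^{−tξ}` and moments `m_j = E ξ^j ∈ [0,∞]`, and let `r ≥ 1` with
`m_{r−1} < ∞`. Then `g(t) := (−1)^r t^{−r} r! [f(t) − ∑_{j<r} (−1)^j m_j t^j/j!]` is
nonnegative on `(0,∞)`, nonincreasing there, and tends to `m_r` in `[0,∞]` as `t ↓ 0`. -/
theorem stmt15
    {Ω : Type*} [MeasurableSpace Ω] (μ : Measure Ω) [IsProbabilityMeasure μ]
    (ξ : Ω → ℝ) (hmeas : Measurable ξ) (hnn : ∀ ω, 0 ≤ ξ ω)
    (r : ℕ) (hr : 1 ≤ r)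
    (hfin : (∫⁻ ω, ENNReal.ofReal (ξ ω ^ (r - 1)) ∂μ) < ⊤)
    (g : ℝ → ℝ)
    (hg : g = fun t => (-1) ^ r * t ^ (-(r : ℝ)) * (r.factorial : ℝ) *
      ((∫ ω, Real.exp (-t * ξ ω) ∂μ) -
        ∑ j ∈ Finset.range r,
          (-1) ^ j * (∫⁻ ω, ENNReal.ofReal (ξ ω ^ j) ∂μ).toReal * t ^ j /
            (j.factorial : ℝ))) :
    (∀ t : ℝ, 0 < t → 0 ≤ g t) ∧
    AntitoneOn g (Set.Ioi 0) ∧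
    Filter.Tendsto (fun t => ENNReal.ofReal (g t)) (nhdsWithin 0 (Set.Ioi 0))
      (nhds (∫⁻ ω, ENNReal.ofReal (ξ ω ^ r) ∂μ)) := by
  have hfac_pos : (0:ℝ) < r.factorial := by exact_mod_cast r.factorial_pos
  have hmξ : ∀ j : ℕ, Measurable fun ω => ξ ω ^ j := fun j => hmeas.pow_const j
  have hint_pred : Integrable (fun ω => ξ ω ^ (r-1)) μ := by
    refine ⟨(hmξ (r-1)).aestronglyMeasurable, ?_⟩
    rw [hasFiniteIntegral_iff_ofReal
      (Filter.Eventually.of_forall fun ω => pow_nonneg (hnn ω) _)]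
    exact hfin
  have hint_pow : ∀ j, j < r → Integrable (fun ω => ξ ω ^ j) μ := by
    intro j hj
    refine ((integrable_const (1:ℝ)).add hint_pred).mono' (hmξ j).aestronglyMeasurable
      (Filter.Eventually.of_forall fun ω => ?_)
    simp only [Pi.add_apply]
    rw [Real.norm_of_nonneg (pow_nonneg (hnn ω) _)]
    rcases le_total (ξ ω) 1 with h | h
    · have h1 : ξ ω ^ j ≤ 1 := pow_le_one₀ (hnn ω) h
      have h2 : (0:ℝ) ≤ ξ ω ^ (r-1) := pow_nonneg (hnn ω) _
      linarith
    · have h1 : ξ ω ^ j ≤ ξ ω ^ (r-1) := pow_le_pow_right₀ h (Nat.le_sub_one_of_lt hj)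
      linarith
  have hm_eq : ∀ j, j < r →
      (∫⁻ ω, ENNReal.ofReal (ξ ω ^ j) ∂μ).toReal = ∫ ω, ξ ω ^ j ∂μ := by
    intro j hj
    rw [integral_eq_lintegral_of_nonneg_ae
      (Filter.Eventually.of_forall fun ω => pow_nonneg (hnn ω) j)
      (hmξ j).aestronglyMeasurable]
  have hint_exp : ∀ t : ℝ, 0 < t → Integrable (fun ω => Real.exp (-(t * ξ ω))) μ := by
    intro t ht
    refine (integrable_const (1:ℝ)).mono'
      ((Real.measurable_exp.comp (measurable_const.mul hmeas).neg).aestronglyMeasurable)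
      (Filter.Eventually.of_forall fun ω => ?_)
    rw [Real.norm_of_nonneg (Real.exp_nonneg _)]
    refine (Real.exp_le_exp.2 ?_).trans_eq Real.exp_zero
    have := hnn ω
    nlinarith
  have hRdecomp : ∀ t : ℝ, (fun ω => Rfun r (t * ξ ω)) =
      fun ω => (-1:ℝ)^r * Real.exp (-(t * ξ ω)) -
        ∑ j ∈ Finset.range r, ((-1:ℝ)^r * (-t)^j / j.factorial) * ξ ω ^ j := by
    intro t
    funext ω
    simp only [Rfun, mul_sub, Finset.mul_sum]
    congr 1
    apply Finset.sum_congr rfl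
    intro j _
    rw [← neg_mul, mul_pow]
    ring
  have hint_R : ∀ t : ℝ, 0 < t → Integrable (fun ω => Rfun r (t * ξ ω)) μ := by
    intro t ht
    rw [hRdecomp t]
    exact ((hint_exp t ht).const_mul _).sub
      (integrable_finset_sum _ fun j hj =>
        (hint_pow j (Finset.mem_range.1 hj)).const_mul _)
  have hI : ∀ t : ℝ, 0 < t → ∫ ω, Rfun r (t * ξ ω) ∂μ =
      (-1:ℝ)^r * ((∫ ω, Real.exp (-(t * ξ ω)) ∂μ) -
        ∑ j ∈ Finset.range r, (-1:ℝ)^j * (∫ ω, ξ ω ^ j ∂μ) * t^j / j.factorial) := by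
    intro t ht
    rw [hRdecomp t]
    rw [integral_sub ((hint_exp t ht).const_mul _)
      (integrable_finset_sum _ fun j hj =>
        (hint_pow j (Finset.mem_range.1 hj)).const_mul _)]
    rw [integral_const_mul, integral_finset_sum _
      (fun j hj => (hint_pow j (Finset.mem_range.1 hj)).const_mul _)]
    rw [mul_sub, Finset.mul_sum]
    congr 1
    apply Finset.sum_congr rfl
    intro j _
    rw [integral_const_mul, neg_pow]
    ring
  have hg_eq : ∀ t : ℝ, 0 < t →
      g t = ∫ ω, (r.factorial : ℝ) * Rfun r (t * ξ ω) / t ^ r ∂μ := by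
    intro t ht
    have htr : (0:ℝ) < t ^ r := pow_pos ht r
    have hrpow : t ^ (-(r:ℝ)) = (t ^ r)⁻¹ := by
      rw [← Real.rpow_natCast t r, ← Real.rpow_neg ht.le]
    have hsum : ∑ j ∈ Finset.range r,
        (-1:ℝ) ^ j * (∫⁻ ω, ENNReal.ofReal (ξ ω ^ j) ∂μ).toReal * t ^ j / (j.factorial : ℝ)
        = ∑ j ∈ Finset.range r, (-1:ℝ)^j * (∫ ω, ξ ω ^ j ∂μ) * t^j / j.factorial :=
      Finset.sum_congr rfl fun j hj => by rw [hm_eq j (Finset.mem_range.1 hj)]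
    rw [hg]
    simp only [neg_mul]
    rw [hrpow, hsum, integral_div, integral_const_mul, hI t ht]
    ring
  have hanti : AntitoneOn g (Set.Ioi 0) := by
    intro t1 h1 t2 h2 h12
    have h1' : (0:ℝ) < t1 := h1
    have h2' : (0:ℝ) < t2 := h2
    rw [hg_eq t1 h1', hg_eq t2 h2']
    refine integral_mono (((hint_R t2 h2').const_mul _).div_const _)
      (((hint_R t1 h1').const_mul _).div_const _) fun ω => ?_
    dsimp only
    rw [mul_div_assoc, mul_div_assoc]
    exact mul_le_mul_of_nonneg_left (psi_anti hr (hnn ω) h1' h12) hfac_pos.le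
  have hpt_le : ∀ t : ℝ, 0 < t → ∀ ω,
      (r.factorial : ℝ) * Rfun r (t * ξ ω) / t ^ r ≤ ξ ω ^ r := by
    intro t ht ω
    have hb := Rfun_le r (t * ξ ω) (mul_nonneg ht.le (hnn ω))
    rw [div_le_iff₀ (pow_pos ht r)]
    calc (r.factorial:ℝ) * Rfun r (t * ξ ω)
        ≤ (r.factorial:ℝ) * ((t * ξ ω)^r / r.factorial) :=
          mul_le_mul_of_nonneg_left hb hfac_pos.le
      _ = (t * ξ ω)^r := by field_simp
      _ = ξ ω ^ r * t ^ r := by rw [mul_pow]; ring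
  have hpt_ge : ∀ t : ℝ, 0 < t → ∀ ω,
      ξ ω ^ r - t * ξ ω ^ (r+1) ≤ (r.factorial : ℝ) * Rfun r (t * ξ ω) / t ^ r := by
    intro t ht ω
    set x := ξ ω with hxdef
    have hx : 0 ≤ x := hnn ω
    have hb := Rfun_ge r (t*x) (mul_nonneg ht.le hx)
    rw [le_div_iff₀ (pow_pos ht r)]
    have hfac2 : (((r+1).factorial : ℝ)) = ((r:ℝ)+1) * r.factorial := by
      push_cast [Nat.factorial_succ]; ring
    have e : (r.factorial:ℝ) * ((t*x)^r / r.factorial - (t*x)^(r+1)/(r+1).factorial)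
        = t^r * x^r - t^r * (t * x^(r+1)) / ((r:ℝ)+1) := by
      rw [hfac2, mul_pow, mul_pow, pow_succ, pow_succ]
      field_simp
    have h1 : (x^r - t*x^(r+1)) * t^r ≤ t^r * x^r - t^r * (t * x^(r+1)) / ((r:ℝ)+1) := by
      have h0 : (0:ℝ) ≤ t^r * (t * x^(r+1)) := by positivity
      have h2 : t^r*(t*x^(r+1))/((r:ℝ)+1) ≤ t^r*(t*x^(r+1)) :=
        div_le_self h0 (by linarith [Nat.cast_nonneg (α := ℝ) r])
      nlinarith
    calc (x^r - t*x^(r+1)) * t^r ≤ _ := h1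
      _ = (r.factorial:ℝ) * ((t*x)^r / r.factorial - (t*x)^(r+1)/(r+1).factorial) := e.symm
      _ ≤ (r.factorial:ℝ) * Rfun r (t*x) := mul_le_mul_of_nonneg_left hb hfac_pos.le
  have hofReal : ∀ t : ℝ, 0 < t → ENNReal.ofReal (g t) =
      ∫⁻ ω, ENNReal.ofReal ((r.factorial : ℝ) * Rfun r (t * ξ ω) / t ^ r) ∂μ := by
    intro t ht
    rw [hg_eq t ht]
    exact MeasureTheory.ofReal_integral_eq_lintegral_ofReal
      (((hint_R t ht).const_mul _).div_const _)
      (Filter.Eventually.of_forall fun ω => by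
        have h0 := Rfun_nonneg r (t * ξ ω) (mul_nonneg ht.le (hnn ω))
        positivity)
  have hlmono : ∀ t1 t2 : ℝ, 0 < t1 → t1 ≤ t2 →
      (∫⁻ ω, ENNReal.ofReal ((r.factorial : ℝ) * Rfun r (t2 * ξ ω) / t2 ^ r) ∂μ)
        ≤ ∫⁻ ω, ENNReal.ofReal ((r.factorial : ℝ) * Rfun r (t1 * ξ ω) / t1 ^ r) ∂μ := by
    intro t1 t2 h1 h12
    refine lintegral_mono fun ω => ENNReal.ofReal_le_ofReal ?_
    rw [mul_div_assoc, mul_div_assoc]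
    exact mul_le_mul_of_nonneg_left (psi_anti hr (hnn ω) h1 h12) hfac_pos.le
  have hseq : Filter.Tendsto (fun n : ℕ => ∫⁻ ω, ENNReal.ofReal
      ((r.factorial : ℝ) * Rfun r ((1/((n:ℝ)+1)) * ξ ω) / (1/((n:ℝ)+1)) ^ r) ∂μ)
      Filter.atTop (nhds (∫⁻ ω, ENNReal.ofReal (ξ ω ^ r) ∂μ)) := by
    apply lintegral_tendsto_of_tendsto_of_monotone
    · intro n
      exact ((((Rfun_continuous r).measurable.comp
        (measurable_const.mul hmeas)).const_mul _).div_const _).ennreal_ofReal.aemeasurable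
    · refine Filter.Eventually.of_forall fun ω => ?_
      intro n m hnm
      apply ENNReal.ofReal_le_ofReal
      rw [mul_div_assoc, mul_div_assoc]
      refine mul_le_mul_of_nonneg_left (psi_anti hr (hnn ω) ?_ ?_) hfac_pos.le
      · positivity
      · apply one_div_le_one_div_of_le (by positivity)
        have : (n:ℝ) ≤ m := Nat.cast_le.2 hnm
        linarith
    · refine Filter.Eventually.of_forall fun ω => ?_
      have hlow : Filter.Tendsto (fun n : ℕ => ξ ω ^ r - (1/((n:ℝ)+1)) * ξ ω ^ (r+1))
          Filter.atTop (nhds (ξ ω ^ r)) := by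
        have h := tendsto_one_div_add_atTop_nhds_zero_nat (𝕜 := ℝ)
        have h2 := h.mul_const (ξ ω ^ (r+1))
        have h3 := (tendsto_const_nhds (x := ξ ω ^ r) (f := Filter.atTop (α := ℕ))).sub h2
        simpa using h3
      have hsq : Filter.Tendsto (fun n : ℕ =>
          (r.factorial : ℝ) * Rfun r ((1/((n:ℝ)+1)) * ξ ω) / (1/((n:ℝ)+1)) ^ r)
          Filter.atTop (nhds (ξ ω ^ r)) :=
        tendsto_of_tendsto_of_tendsto_of_le_of_le hlow tendsto_const_nhds
          (fun n => hpt_ge _ (by positivity) ω) (fun n => hpt_le _ (by positivity) ω)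
      exact (ENNReal.continuous_ofReal.tendsto _).comp hsq
  refine ⟨?_, hanti, ?_⟩
  · intro t ht
    rw [hg_eq t ht]
    refine integral_nonneg fun ω => ?_
    have h0 := Rfun_nonneg r (t * ξ ω) (mul_nonneg ht.le (hnn ω))
    positivity
  · apply tendsto_order.2
    constructor
    · intro a ha
      obtain ⟨n₀, hn₀⟩ := (hseq.eventually (eventually_gt_nhds ha)).exists
      have hpos : (0:ℝ) < 1/((n₀:ℝ)+1) := by positivity
      have hmem : Set.Ioc (0:ℝ) (1/((n₀:ℝ)+1)) ∈ nhdsWithin 0 (Set.Ioi 0) :=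
        Ioc_mem_nhdsGT_of_mem ⟨le_refl 0, hpos⟩
      filter_upwards [hmem] with t ht
      rw [hofReal t ht.1]
      exact lt_of_lt_of_le hn₀ (hlmono t _ ht.1 ht.2)
    · intro a ha
      filter_upwards [self_mem_nhdsWithin] with t ht
      have ht' : (0:ℝ) < t := ht
      rw [hofReal t ht']
      exact lt_of_le_of_lt
        (lintegral_mono fun ω => ENNReal.ofReal_le_ofReal (hpt_le t ht' ω)) ha
end
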